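/- arXiv:1402.3099 — 8 statements merged into one kernel-verified Lean document; each statement's English description precedes it below -/
import Mathlib

section
/- Let V₁,…,V₅ : I → E⁵ be a Frenet frame with positive smooth curvatures k₁,k₂,k₃,k₄ satisfying the Frenet equations on an open interval I. If U ∈ E⁵ is a constant unit vector such that ⟪V₁(s), U⟫ = cos θ is a nonzero constant on I (so the curve is a V₁-helix with axis U), then for every s ∈ I one has U = cos θ · [ V₁(s) + (k₁/k₂)(s)·V₃(s) + (1/k₃)(s)·(k₁/k₂)′(s)·V₄(s) + (1/k₄)(s)·( (k₁k₃/k₂)(s) + ((1/k₃)·(k₁/k₂)′)′(s) )·V₅(s) ]. -/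
open Real
open scoped RealInnerProductSpace ContDiff

theorem stmt_1
    (a b : ℝ) (hab : a < b)
    (V₁ V₂ V₃ V₄ V₅ : ℝ → EuclideanSpace ℝ (Fin 5))
    (k₁ k₂ k₃ k₄ : ℝ → ℝ)
    (hV₁s : ContDiffOn ℝ ∞ V₁ (Set.Ioo a b))
    (hV₂s : ContDiffOn ℝ ∞ V₂ (Set.Ioo a b))
    (hV₃s : ContDiffOn ℝ ∞ V₃ (Set.Ioo a b))
    (hV₄s : ContDiffOn ℝ ∞ V₄ (Set.Ioo a b))
    (hV₅s : ContDiffOn ℝ ∞ V₅ (Set.Ioo a b))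
    (hk₁s : ContDiffOn ℝ ∞ k₁ (Set.Ioo a b))
    (hk₂s : ContDiffOn ℝ ∞ k₂ (Set.Ioo a b))
    (hk₃s : ContDiffOn ℝ ∞ k₃ (Set.Ioo a b))
    (hk₄s : ContDiffOn ℝ ∞ k₄ (Set.Ioo a b))
    (hk₁ : ∀ s ∈ Set.Ioo a b, 0 < k₁ s)
    (hk₂ : ∀ s ∈ Set.Ioo a b, 0 < k₂ s)
    (hk₃ : ∀ s ∈ Set.Ioo a b, 0 < k₃ s)
    (hk₄ : ∀ s ∈ Set.Ioo a b, 0 < k₄ s)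
    (horth : ∀ s ∈ Set.Ioo a b, Orthonormal ℝ ![V₁ s, V₂ s, V₃ s, V₄ s, V₅ s])
    (hF₁ : ∀ s ∈ Set.Ioo a b, HasDerivAt V₁ (k₁ s • V₂ s) s)
    (hF₂ : ∀ s ∈ Set.Ioo a b, HasDerivAt V₂ (-(k₁ s) • V₁ s + k₂ s • V₃ s) s)
    (hF₃ : ∀ s ∈ Set.Ioo a b, HasDerivAt V₃ (-(k₂ s) • V₂ s + k₃ s • V₄ s) s)
    (hF₄ : ∀ s ∈ Set.Ioo a b, HasDerivAt V₄ (-(k₃ s) • V₃ s + k₄ s • V₅ s) s)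
    (hF₅ : ∀ s ∈ Set.Ioo a b, HasDerivAt V₅ (-(k₄ s) • V₄ s) s)
    (U : EuclideanSpace ℝ (Fin 5)) (θ : ℝ)
    (hU : ‖U‖ = 1) (hθ : Real.cos θ ≠ 0)
    (hhelix : ∀ s ∈ Set.Ioo a b, ⟪V₁ s, U⟫ = Real.cos θ) :
    ∀ s ∈ Set.Ioo a b,
      U = Real.cos θ •
        (V₁ s + (k₁ s / k₂ s) • V₃ s
          + ((1 / k₃ s) * deriv (fun t => k₁ t / k₂ t) s) • V₄ s
          + ((1 / k₄ s) *
              (k₁ s * k₃ s / k₂ s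
                + deriv (fun t => (1 / k₃ t) * deriv (fun u => k₁ u / k₂ u) t) s)) • V₅ s) := by
  set I := Set.Ioo a b with hI
  have hIopen : IsOpen I := isOpen_Ioo
  set c := Real.cos θ with hc
  -- inner product coefficients
  set a₁ : ℝ → ℝ := fun t => ⟪V₁ t, U⟫ with ha₁def
  set a₂ : ℝ → ℝ := fun t => ⟪V₂ t, U⟫ with ha₂def
  set a₃ : ℝ → ℝ := fun t => ⟪V₃ t, U⟫ with ha₃def
  set a₄ : ℝ → ℝ := fun t => ⟪V₄ t, U⟫ with ha₄def
  set a₅ : ℝ → ℝ := fun t => ⟪V₅ t, U⟫ with ha₅def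
  have hdinner : ∀ (V : ℝ → EuclideanSpace ℝ (Fin 5)) (D : EuclideanSpace ℝ (Fin 5)) (t : ℝ),
      HasDerivAt V D t → HasDerivAt (fun u => ⟪V u, U⟫) ⟪D, U⟫ t := by
    intro V D t h
    simpa using h.inner ℝ (hasDerivAt_const t U)
  -- derivative-matching via eventual equality
  have huniq : ∀ (f g : ℝ → ℝ) (d e t : ℝ), t ∈ I → (∀ u ∈ I, f u = g u) →
      HasDerivAt f d t → HasDerivAt g e t → d = e := by
    intro f g d e t ht hfg hf hg
    have hev : f =ᶠ[nhds t] g := Filter.eventuallyEq_of_mem (hIopen.mem_nhds ht) hfg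
    have : HasDerivAt f e t := hg.congr_of_eventuallyEq hev
    exact hf.unique this
  -- a₂ = 0 on I
  have ha₂ : ∀ t ∈ I, a₂ t = 0 := by
    intro t ht
    have h1 : HasDerivAt a₁ ⟪k₁ t • V₂ t, U⟫ t := hdinner V₁ _ t (hF₁ t ht)
    have h2 : HasDerivAt (fun _ : ℝ => c) 0 t := hasDerivAt_const t c
    have := huniq a₁ (fun _ => c) _ 0 t ht (fun u hu => hhelix u hu) h1 h2
    rw [real_inner_smul_left] at this
    have hk := (hk₁ t ht).ne'
    have : k₁ t * a₂ t = 0 := this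
    exact (mul_eq_zero.1 this).resolve_left hk
  -- a₃ = (k₁/k₂) * c on I
  have ha₃ : ∀ t ∈ I, a₃ t = k₁ t / k₂ t * c := by
    intro t ht
    have h1 : HasDerivAt a₂ ⟪-(k₁ t) • V₁ t + k₂ t • V₃ t, U⟫ t := hdinner V₂ _ t (hF₂ t ht)
    have h2 : HasDerivAt (fun _ : ℝ => (0:ℝ)) 0 t := hasDerivAt_const t 0
    have h := huniq a₂ (fun _ => (0:ℝ)) _ 0 t ht ha₂ h1 h2
    rw [inner_add_left, real_inner_smul_left, real_inner_smul_left] at h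
    have h : -(k₁ t) * a₁ t + k₂ t * a₃ t = 0 := h
    have hA : a₁ t = c := hhelix t ht
    have hk := (hk₂ t ht).ne'
    rw [hA] at h
    field_simp
    linarith
  -- smoothness of g := k₁/k₂ on I
  have hk₂ne : ∀ t ∈ I, k₂ t ≠ 0 := fun t ht => (hk₂ t ht).ne'
  have hk₃ne : ∀ t ∈ I, k₃ t ≠ 0 := fun t ht => (hk₃ t ht).ne'
  set g : ℝ → ℝ := fun t => k₁ t / k₂ t with hgdef
  have hgC : ContDiffOn ℝ ∞ g I := hk₁s.div hk₂s hk₂ne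
  have hgdiff : ∀ t ∈ I, DifferentiableAt ℝ g t := fun t ht =>
    (hgC.contDiffAt (hIopen.mem_nhds ht)).differentiableAt (by norm_num)
  -- a₄ = (1/k₃) * g' * c on I
  have ha₄ : ∀ t ∈ I, a₄ t = (1 / k₃ t) * deriv g t * c := by
    intro t ht
    have h1 : HasDerivAt a₃ ⟪-(k₂ t) • V₂ t + k₃ t • V₄ t, U⟫ t := hdinner V₃ _ t (hF₃ t ht)
    have h2 : HasDerivAt (fun u => g u * c) (deriv g t * c) t :=
      ((hgdiff t ht).hasDerivAt).mul_const c
    have h := huniq a₃ (fun u => g u * c) _ _ t ht ha₃ h1 h2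
    rw [inner_add_left, real_inner_smul_left, real_inner_smul_left] at h
    have h : -(k₂ t) * a₂ t + k₃ t * a₄ t = deriv g t * c := h
    rw [ha₂ t ht] at h
    have hk := hk₃ne t ht
    field_simp
    linarith
  -- smoothness of f := (1/k₃) * g'
  set f : ℝ → ℝ := fun t => (1 / k₃ t) * deriv g t with hfdef
  have hderivgC : ContDiffOn ℝ ∞ (deriv g) I := hgC.deriv_of_isOpen hIopen (by norm_num)
  have hfC : ContDiffOn ℝ ∞ f I := (contDiffOn_const.div hk₃s hk₃ne).mul hderivgC
  have hfdiff : ∀ t ∈ I, DifferentiableAt ℝ f t := fun t ht =>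
    (hfC.contDiffAt (hIopen.mem_nhds ht)).differentiableAt (by norm_num)
  -- a₅ on I
  have ha₅ : ∀ t ∈ I, a₅ t = (1 / k₄ t) * (k₁ t * k₃ t / k₂ t + deriv f t) * c := by
    intro t ht
    have h1 : HasDerivAt a₄ ⟪-(k₃ t) • V₃ t + k₄ t • V₅ t, U⟫ t := hdinner V₄ _ t (hF₄ t ht)
    have h2 : HasDerivAt (fun u => f u * c) (deriv f t * c) t :=
      ((hfdiff t ht).hasDerivAt).mul_const c
    have h := huniq a₄ (fun u => f u * c) _ _ t ht ha₄ h1 h2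
    rw [inner_add_left, real_inner_smul_left, real_inner_smul_left] at h
    have h : -(k₃ t) * a₃ t + k₄ t * a₅ t = deriv f t * c := h
    rw [ha₃ t ht] at h
    have hk4 := (hk₄ t ht).ne'
    have hk2 := hk₂ne t ht
    field_simp at h ⊢
    ring_nf at h ⊢
    linarith
  -- assemble
  intro s hs
  have hrepr : U = a₁ s • V₁ s + a₂ s • V₂ s + a₃ s • V₃ s + a₄ s • V₄ s + a₅ s • V₅ s := by
    have o := horth s hs
    have hcard : Fintype.card (Fin 5) = Module.finrank ℝ (EuclideanSpace ℝ (Fin 5)) := by simp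
    have hB : ⇑(basisOfLinearIndependentOfCardEqFinrank o.linearIndependent hcard)
        = ![V₁ s, V₂ s, V₃ s, V₄ s, V₅ s] :=
      coe_basisOfLinearIndependentOfCardEqFinrank o.linearIndependent hcard
    have ho : Orthonormal ℝ
        ⇑(basisOfLinearIndependentOfCardEqFinrank o.linearIndependent hcard) := by
      rw [hB]; exact o
    have h := ((basisOfLinearIndependentOfCardEqFinrank o.linearIndependent
        hcard).toOrthonormalBasis ho).sum_repr' U
    rw [Module.Basis.coe_toOrthonormalBasis] at h
    rw [Fin.sum_univ_five] at h
    simp only [hB] at h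
    simpa [ha₁def, ha₂def, ha₃def, ha₄def, ha₅def] using h.symm
  have h1 : a₁ s = c := hhelix s hs
  rw [hrepr, h1, ha₂ s hs, ha₃ s hs, ha₄ s hs, ha₅ s hs]
  show _ = c • (V₁ s + (k₁ s / k₂ s) • V₃ s + ((1 / k₃ s) * deriv g s) • V₄ s
      + ((1 / k₄ s) * (k₁ s * k₃ s / k₂ s + deriv f s)) • V₅ s)
  match_scalars <;> ring
end

section
/- Let V₁,…,V₅ : I → E⁵ be a Frenet frame with positive smooth curvatures k₁,k₂,k₃,k₄ satisfying the Frenet equations on an open interval I. Then there exists a constant unit vector U ∈ E⁵ such that s ↦ ⟪V₁(s), U⟫ is a nonzero constant on I (i.e., the curve is a V₁-helix) if and only if there exists a C² function f : I → ℝ satisfying both k₄·f = k₁k₃/k₂ + ((1/k₃)·(k₁/k₂)′)′ and (1/k₄)·f′ = −(1/k₃)·(k₁/k₂)′ on I. -/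
open Real
open scoped RealInnerProductSpace ContDiff

set_option maxHeartbeats 1000000 in
theorem stmt_2
    (a b : ℝ) (hab : a < b)
    (V₁ V₂ V₃ V₄ V₅ : ℝ → EuclideanSpace ℝ (Fin 5))
    (k₁ k₂ k₃ k₄ : ℝ → ℝ)
    (hV₁s : ContDiffOn ℝ ∞ V₁ (Set.Ioo a b))
    (hV₂s : ContDiffOn ℝ ∞ V₂ (Set.Ioo a b))
    (hV₃s : ContDiffOn ℝ ∞ V₃ (Set.Ioo a b))
    (hV₄s : ContDiffOn ℝ ∞ V₄ (Set.Ioo a b))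
    (hV₅s : ContDiffOn ℝ ∞ V₅ (Set.Ioo a b))
    (hk₁s : ContDiffOn ℝ ∞ k₁ (Set.Ioo a b))
    (hk₂s : ContDiffOn ℝ ∞ k₂ (Set.Ioo a b))
    (hk₃s : ContDiffOn ℝ ∞ k₃ (Set.Ioo a b))
    (hk₄s : ContDiffOn ℝ ∞ k₄ (Set.Ioo a b))
    (hk₁ : ∀ s ∈ Set.Ioo a b, 0 < k₁ s)
    (hk₂ : ∀ s ∈ Set.Ioo a b, 0 < k₂ s)
    (hk₃ : ∀ s ∈ Set.Ioo a b, 0 < k₃ s)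
    (hk₄ : ∀ s ∈ Set.Ioo a b, 0 < k₄ s)
    (horth : ∀ s ∈ Set.Ioo a b, Orthonormal ℝ ![V₁ s, V₂ s, V₃ s, V₄ s, V₅ s])
    (hF₁ : ∀ s ∈ Set.Ioo a b, HasDerivAt V₁ (k₁ s • V₂ s) s)
    (hF₂ : ∀ s ∈ Set.Ioo a b, HasDerivAt V₂ (-(k₁ s) • V₁ s + k₂ s • V₃ s) s)
    (hF₃ : ∀ s ∈ Set.Ioo a b, HasDerivAt V₃ (-(k₂ s) • V₂ s + k₃ s • V₄ s) s)
    (hF₄ : ∀ s ∈ Set.Ioo a b, HasDerivAt V₄ (-(k₃ s) • V₃ s + k₄ s • V₅ s) s)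
    (hF₅ : ∀ s ∈ Set.Ioo a b, HasDerivAt V₅ (-(k₄ s) • V₄ s) s)
    :
    (∃ U : EuclideanSpace ℝ (Fin 5), ‖U‖ = 1 ∧
        ∃ c : ℝ, c ≠ 0 ∧ ∀ s ∈ Set.Ioo a b, ⟪V₁ s, U⟫ = c) ↔
    (∃ f : ℝ → ℝ, ContDiffOn ℝ 2 f (Set.Ioo a b) ∧
      (∀ s ∈ Set.Ioo a b,
        k₄ s * f s = k₁ s * k₃ s / k₂ s
          + deriv (fun t => (1 / k₃ t) * deriv (fun u => k₁ u / k₂ u) t) s) ∧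
      (∀ s ∈ Set.Ioo a b,
        (1 / k₄ s) * deriv f s = -((1 / k₃ s) * deriv (fun t => k₁ t / k₂ t) s))) := by
  have hI : IsOpen (Set.Ioo a b) := isOpen_Ioo
  have h1inf : (1 : WithTop ℕ∞) ≤ ∞ := WithTop.coe_le_coe.mpr le_top
  have h2inf : (2 : WithTop ℕ∞) ≤ ∞ := WithTop.coe_le_coe.mpr le_top
  have hk₂ne : ∀ s ∈ Set.Ioo a b, k₂ s ≠ 0 := fun s hs => (hk₂ s hs).ne'
  have hk₃ne : ∀ s ∈ Set.Ioo a b, k₃ s ≠ 0 := fun s hs => (hk₃ s hs).ne'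
  have hk₄ne : ∀ s ∈ Set.Ioo a b, k₄ s ≠ 0 := fun s hs => (hk₄ s hs).ne'
  have hg₃s : ContDiffOn ℝ ∞ (fun u => k₁ u / k₂ u) (Set.Ioo a b) := hk₁s.div hk₂s hk₂ne
  have hg₃d : ∀ s ∈ Set.Ioo a b,
      HasDerivAt (fun u => k₁ u / k₂ u) (deriv (fun u => k₁ u / k₂ u) s) s := fun s hs =>
    (((hg₃s.differentiableOn (by simp)).differentiableAt (hI.mem_nhds hs))).hasDerivAt
  have hdg₃s : ContDiffOn ℝ ∞ (deriv (fun u => k₁ u / k₂ u)) (Set.Ioo a b) :=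
    ((contDiffOn_infty_iff_deriv_of_isOpen hI).mp hg₃s).2
  have hg₄s : ContDiffOn ℝ ∞ (fun t => (1 / k₃ t) * deriv (fun u => k₁ u / k₂ u) t)
      (Set.Ioo a b) := (contDiffOn_const.div hk₃s hk₃ne).mul hdg₃s
  have hg₄d : ∀ s ∈ Set.Ioo a b,
      HasDerivAt (fun t => (1 / k₃ t) * deriv (fun u => k₁ u / k₂ u) t)
        (deriv (fun t => (1 / k₃ t) * deriv (fun u => k₁ u / k₂ u) t) s) s := fun s hs =>
    (((hg₄s.differentiableOn (by simp)).differentiableAt (hI.mem_nhds hs))).hasDerivAt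
  constructor
  · rintro ⟨U, hU, c, hc, hcon⟩
    have hdi : ∀ (V : ℝ → EuclideanSpace ℝ (Fin 5)) (Wv : EuclideanSpace ℝ (Fin 5)) (s : ℝ),
        HasDerivAt V Wv s → HasDerivAt (fun t => ⟪V t, U⟫) ⟪Wv, U⟫ s := fun V Wv s h => by
      have := HasDerivAt.inner ℝ h (hasDerivAt_const s U)
      rwa [inner_zero_right, zero_add] at this
    -- a₂ = 0
    have ha₂ : ∀ s ∈ Set.Ioo a b, ⟪V₂ s, U⟫ = 0 := by
      intro s hs
      have h1 := hdi V₁ _ s (hF₁ s hs)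
      rw [real_inner_smul_left] at h1
      have h2 : HasDerivAt (fun t => ⟪V₁ t, U⟫) 0 s :=
        (hasDerivAt_const s c).congr_of_eventuallyEq
          (Filter.eventuallyEq_of_mem (hI.mem_nhds hs) fun t ht => hcon t ht)
      exact (mul_eq_zero.mp (h1.unique h2)).resolve_left (hk₁ s hs).ne'
    -- a₃ = c * k₁/k₂
    have ha₃ : ∀ s ∈ Set.Ioo a b, ⟪V₃ s, U⟫ = c * (k₁ s / k₂ s) := by
      intro s hs
      have h1 := hdi V₂ _ s (hF₂ s hs)
      rw [inner_add_left, real_inner_smul_left, real_inner_smul_left] at h1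
      have h2 : HasDerivAt (fun t => ⟪V₂ t, U⟫) 0 s :=
        (hasDerivAt_const s (0:ℝ)).congr_of_eventuallyEq
          (Filter.eventuallyEq_of_mem (hI.mem_nhds hs) fun t ht => ha₂ t ht)
      have h3 := h1.unique h2
      rw [hcon s hs] at h3
      rw [show c * (k₁ s / k₂ s) = c * k₁ s / k₂ s by ring, eq_div_iff (hk₂ne s hs)]
      linear_combination h3
    -- a₄ = c * (1/k₃) * (k₁/k₂)'
    have ha₄ : ∀ s ∈ Set.Ioo a b,
        ⟪V₄ s, U⟫ = c * ((1 / k₃ s) * deriv (fun u => k₁ u / k₂ u) s) := by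
      intro s hs
      have h1 := hdi V₃ _ s (hF₃ s hs)
      rw [inner_add_left, real_inner_smul_left, real_inner_smul_left] at h1
      have h2 : HasDerivAt (fun t => ⟪V₃ t, U⟫) (c * deriv (fun u => k₁ u / k₂ u) s) s :=
        ((hg₃d s hs).const_mul c).congr_of_eventuallyEq
          (Filter.eventuallyEq_of_mem (hI.mem_nhds hs) fun t ht => ha₃ t ht)
      have h3 := h1.unique h2
      rw [ha₂ s hs] at h3
      rw [show c * ((1 / k₃ s) * deriv (fun u => k₁ u / k₂ u) s)
          = c * deriv (fun u => k₁ u / k₂ u) s / k₃ s by ring, eq_div_iff (hk₃ne s hs)]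
      linear_combination h3
    -- key relation for a₅
    have ha₅ : ∀ s ∈ Set.Ioo a b,
        k₄ s * ⟪V₅ s, U⟫ = c * (k₁ s * k₃ s / k₂ s
          + deriv (fun t => (1 / k₃ t) * deriv (fun u => k₁ u / k₂ u) t) s) := by
      intro s hs
      have h1 := hdi V₄ _ s (hF₄ s hs)
      rw [inner_add_left, real_inner_smul_left, real_inner_smul_left] at h1
      have h2 : HasDerivAt (fun t => ⟪V₄ t, U⟫)
          (c * deriv (fun t => (1 / k₃ t) * deriv (fun u => k₁ u / k₂ u) t) s) s :=
        ((hg₄d s hs).const_mul c).congr_of_eventuallyEq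
          (Filter.eventuallyEq_of_mem (hI.mem_nhds hs) fun t ht => ha₄ t ht)
      have h3 := h1.unique h2
      rw [ha₃ s hs] at h3
      linear_combination h3
    refine ⟨fun s => ⟪V₅ s, U⟫ / c, ?_, ?_, ?_⟩
    · exact ((hV₅s.inner ℝ contDiffOn_const).div_const c).of_le h2inf
    · intro s hs
      have h := ha₅ s hs
      rw [← mul_div_assoc, div_eq_iff hc]
      linear_combination h
    · intro s hs
      have h1 := hdi V₅ _ s (hF₅ s hs)
      rw [real_inner_smul_left] at h1
      have hdf : HasDerivAt (fun t => ⟪V₅ t, U⟫ / c) (-(k₄ s) * ⟪V₄ s, U⟫ / c) s :=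
        h1.div_const c
      rw [hdf.deriv, ha₄ s hs]
      have hk4 := hk₄ne s hs
      have hk3 := hk₃ne s hs
      field_simp
  · rintro ⟨f, hfs, h1, h2⟩
    have hs₀ : (a + b) / 2 ∈ Set.Ioo a b := ⟨by linarith, by linarith⟩
    set s₀ : ℝ := (a + b) / 2
    set W : ℝ → EuclideanSpace ℝ (Fin 5) := fun s =>
      V₁ s + (k₁ s / k₂ s) • V₃ s
        + ((1 / k₃ s) * deriv (fun u => k₁ u / k₂ u) s) • V₄ s + f s • V₅ s with hWdef
    have hW' : ∀ s ∈ Set.Ioo a b, HasDerivAt W 0 s := by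
      intro s hs
      have hdf : HasDerivAt f (deriv f s) s :=
        ((hfs.differentiableOn (by norm_num)).differentiableAt (hI.mem_nhds hs)).hasDerivAt
      have H := (((hF₁ s hs).add ((hg₃d s hs).smul (hF₃ s hs))).add
        ((hg₄d s hs).smul (hF₄ s hs))).add (hdf.smul (hF₅ s hs))
      have hk2 := hk₂ne s hs
      have hk3 := hk₃ne s hs
      have hk4 := hk₄ne s hs
      have c2 : k₁ s - (k₁ s / k₂ s) * k₂ s = 0 := by field_simp; ring
      have c3 : deriv (fun u => k₁ u / k₂ u) s
          - k₃ s * ((1 / k₃ s) * deriv (fun u => k₁ u / k₂ u) s) = 0 := by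
        field_simp
        ring
      have c4 : k₃ s * (k₁ s / k₂ s)
          + deriv (fun t => (1 / k₃ t) * deriv (fun u => k₁ u / k₂ u) t) s
          - k₄ s * f s = 0 := by
        linear_combination -h1 s hs
      have c5 : k₄ s * ((1 / k₃ s) * deriv (fun u => k₁ u / k₂ u) s) + deriv f s = 0 := by
        have h := h2 s hs
        field_simp at h ⊢
        linear_combination h
      have expand :
          k₁ s • V₂ s
            + ((k₁ s / k₂ s) • (-(k₂ s) • V₂ s + k₃ s • V₄ s)
                + deriv (fun u => k₁ u / k₂ u) s • V₃ s)
            + (((1 / k₃ s) * deriv (fun u => k₁ u / k₂ u) s) • (-(k₃ s) • V₃ s + k₄ s • V₅ s)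
                + deriv (fun t => (1 / k₃ t) * deriv (fun u => k₁ u / k₂ u) t) s • V₄ s)
            + (f s • (-(k₄ s) • V₄ s) + deriv f s • V₅ s)
          = (k₁ s - (k₁ s / k₂ s) * k₂ s) • V₂ s
            + (deriv (fun u => k₁ u / k₂ u) s
                - k₃ s * ((1 / k₃ s) * deriv (fun u => k₁ u / k₂ u) s)) • V₃ s
            + (k₃ s * (k₁ s / k₂ s)
                + deriv (fun t => (1 / k₃ t) * deriv (fun u => k₁ u / k₂ u) t) s
                - k₄ s * f s) • V₄ s
            + (k₄ s * ((1 / k₃ s) * deriv (fun u => k₁ u / k₂ u) s) + deriv f s) • V₅ s := by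
        module
      have hzero :
          k₁ s • V₂ s
            + ((k₁ s / k₂ s) • (-(k₂ s) • V₂ s + k₃ s • V₄ s)
                + deriv (fun u => k₁ u / k₂ u) s • V₃ s)
            + (((1 / k₃ s) * deriv (fun u => k₁ u / k₂ u) s) • (-(k₃ s) • V₃ s + k₄ s • V₅ s)
                + deriv (fun t => (1 / k₃ t) * deriv (fun u => k₁ u / k₂ u) t) s • V₄ s)
            + (f s • (-(k₄ s) • V₄ s) + deriv f s • V₅ s)
          = (0 : EuclideanSpace ℝ (Fin 5)) := by
        rw [expand, c2, c3, c4, c5]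
        simp
      rw [hzero] at H
      exact H
    have hWc : ∀ s ∈ Set.Ioo a b, W s = W s₀ := by
      intro s hs
      have hb := Convex.norm_image_sub_le_of_norm_hasDerivWithin_le
        (f' := fun _ => (0 : EuclideanSpace ℝ (Fin 5)))
        (fun x hx => (hW' x hx).hasDerivWithinAt)
        (fun x _ => by simp : ∀ x ∈ Set.Ioo a b, ‖(fun _ => (0 : EuclideanSpace ℝ (Fin 5))) x‖ ≤ 0)
        (convex_Ioo a b) hs₀ hs
      rw [zero_mul] at hb
      exact sub_eq_zero.mp (norm_le_zero_iff.mp hb)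
    have hinner : ∀ s ∈ Set.Ioo a b, ⟪V₁ s, W s⟫ = 1 := by
      intro s hs
      have ho := (orthonormal_iff_ite (𝕜 := ℝ)).mp (horth s hs)
      have o11 : ⟪V₁ s, V₁ s⟫ = 1 := by simpa using ho 0 0
      have o13 : ⟪V₁ s, V₃ s⟫ = 0 := by simpa using ho 0 2
      have o14 : ⟪V₁ s, V₄ s⟫ = 0 := by simpa using ho 0 3
      have o15 : ⟪V₁ s, V₅ s⟫ = 0 := by simpa using ho 0 4
      have hWs : W s = V₁ s + (k₁ s / k₂ s) • V₃ s
          + ((1 / k₃ s) * deriv (fun u => k₁ u / k₂ u) s) • V₄ s + f s • V₅ s := rfl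
      rw [hWs, inner_add_right, inner_add_right, inner_add_right, real_inner_smul_right,
        real_inner_smul_right, real_inner_smul_right, o11, o13, o14, o15]
      ring
    have hWne : W s₀ ≠ 0 := by
      intro h
      have h' := hinner s₀ hs₀
      rw [h, inner_zero_right] at h'
      norm_num at h'
    have hnorm : ‖W s₀‖ ≠ 0 := norm_ne_zero_iff.mpr hWne
    refine ⟨‖W s₀‖⁻¹ • W s₀, ?_, ‖W s₀‖⁻¹, inv_ne_zero hnorm, ?_⟩
    · rw [norm_smul, norm_inv, norm_norm, inv_mul_cancel₀ hnorm]
    · intro s hs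
      rw [real_inner_smul_right, ← hWc s hs, hinner s hs, mul_one]
end

section
/- Let V₁,…,V₅ : I → E⁵ be a Frenet frame with positive smooth curvatures k₁,k₂,k₃,k₄ satisfying the Frenet equations on an open interval I. Let θ : I → ℝ be a function with θ′ = k₄ on I, and let F, G : I → ℝ be functions with F′(s) = (k₁k₃/k₂)(s)·sin θ(s) and G′(s) = (k₁k₃/k₂)(s)·cos θ(s) on I. Then there exists a constant unit vector U ∈ E⁵ such that s ↦ ⟪V₁(s), U⟫ is a nonzero constant on I (i.e., the curve is a V₁-helix) if and only if there exist real constants A and B such that (1/k₃)(s)·(k₁/k₂)′(s) = (A − F(s))·sin θ(s) − (B + G(s))·cos θ(s) for all s ∈ I. -/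
open Real
open scoped RealInnerProductSpace ContDiff

private lemma constOnIoo {E : Type*} [NormedAddCommGroup E] [NormedSpace ℝ E] {f : ℝ → E} {a b : ℝ}
    (h : ∀ s ∈ Set.Ioo a b, HasDerivAt f (0 : E) s) :
    ∀ x ∈ Set.Ioo a b, ∀ y ∈ Set.Ioo a b, f x = f y := by
  intro x hx y hy
  refine (convex_Ioo a b).is_const_of_fderivWithin_eq_zero
    (fun s hs => ((h s hs).differentiableAt).differentiableWithinAt) (fun s hs => ?_) hx hy
  rw [fderivWithin_eq_fderiv (isOpen_Ioo.uniqueDiffWithinAt hs) (h s hs).differentiableAt,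
    (h s hs).hasFDerivAt.fderiv]
  ext z
  simp

theorem stmt_3
    (a b : ℝ) (hab : a < b)
    (V₁ V₂ V₃ V₄ V₅ : ℝ → EuclideanSpace ℝ (Fin 5))
    (k₁ k₂ k₃ k₄ : ℝ → ℝ)
    (hV₁s : ContDiffOn ℝ ∞ V₁ (Set.Ioo a b))
    (hV₂s : ContDiffOn ℝ ∞ V₂ (Set.Ioo a b))
    (hV₃s : ContDiffOn ℝ ∞ V₃ (Set.Ioo a b))
    (hV₄s : ContDiffOn ℝ ∞ V₄ (Set.Ioo a b))
    (hV₅s : ContDiffOn ℝ ∞ V₅ (Set.Ioo a b))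
    (hk₁s : ContDiffOn ℝ ∞ k₁ (Set.Ioo a b))
    (hk₂s : ContDiffOn ℝ ∞ k₂ (Set.Ioo a b))
    (hk₃s : ContDiffOn ℝ ∞ k₃ (Set.Ioo a b))
    (hk₄s : ContDiffOn ℝ ∞ k₄ (Set.Ioo a b))
    (hk₁ : ∀ s ∈ Set.Ioo a b, 0 < k₁ s)
    (hk₂ : ∀ s ∈ Set.Ioo a b, 0 < k₂ s)
    (hk₃ : ∀ s ∈ Set.Ioo a b, 0 < k₃ s)
    (hk₄ : ∀ s ∈ Set.Ioo a b, 0 < k₄ s)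
    (horth : ∀ s ∈ Set.Ioo a b, Orthonormal ℝ ![V₁ s, V₂ s, V₃ s, V₄ s, V₅ s])
    (hF₁ : ∀ s ∈ Set.Ioo a b, HasDerivAt V₁ (k₁ s • V₂ s) s)
    (hF₂ : ∀ s ∈ Set.Ioo a b, HasDerivAt V₂ (-(k₁ s) • V₁ s + k₂ s • V₃ s) s)
    (hF₃ : ∀ s ∈ Set.Ioo a b, HasDerivAt V₃ (-(k₂ s) • V₂ s + k₃ s • V₄ s) s)
    (hF₄ : ∀ s ∈ Set.Ioo a b, HasDerivAt V₄ (-(k₃ s) • V₃ s + k₄ s • V₅ s) s)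
    (hF₅ : ∀ s ∈ Set.Ioo a b, HasDerivAt V₅ (-(k₄ s) • V₄ s) s)
    (θ F G : ℝ → ℝ)
    (hθ : ∀ s ∈ Set.Ioo a b, HasDerivAt θ (k₄ s) s)
    (hF : ∀ s ∈ Set.Ioo a b, HasDerivAt F (k₁ s * k₃ s / k₂ s * Real.sin (θ s)) s)
    (hG : ∀ s ∈ Set.Ioo a b, HasDerivAt G (k₁ s * k₃ s / k₂ s * Real.cos (θ s)) s) :
    (∃ U : EuclideanSpace ℝ (Fin 5), ‖U‖ = 1 ∧
        ∃ c : ℝ, c ≠ 0 ∧ ∀ s ∈ Set.Ioo a b, ⟪V₁ s, U⟫ = c) ↔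
    (∃ A B : ℝ, ∀ s ∈ Set.Ioo a b,
        (1 / k₃ s) * deriv (fun t => k₁ t / k₂ t) s
          = (A - F s) * Real.sin (θ s) - (B + G s) * Real.cos (θ s)) := by
  have hs₀ : (a + b) / 2 ∈ Set.Ioo a b := ⟨by linarith, by linarith⟩
  set s₀ : ℝ := (a + b) / 2
  have hmem : ∀ s ∈ Set.Ioo a b, Set.Ioo a b ∈ nhds s := fun s hs => isOpen_Ioo.mem_nhds hs
  constructor
  · rintro ⟨U, hUnorm, c, hc, hcU⟩
    -- derivatives of the inner products
    have d₁ : ∀ s ∈ Set.Ioo a b, HasDerivAt (fun t => ⟪V₁ t, U⟫)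
        (k₁ s * ⟪V₂ s, U⟫) s := by
      intro s hs
      have h := (hF₁ s hs).inner ℝ (hasDerivAt_const s U)
      simp only [inner_zero_right, real_inner_smul_left, zero_add] at h
      exact h
    have d₂ : ∀ s ∈ Set.Ioo a b, HasDerivAt (fun t => ⟪V₂ t, U⟫)
        (-(k₁ s) * ⟪V₁ s, U⟫ + k₂ s * ⟪V₃ s, U⟫) s := by
      intro s hs
      have h := (hF₂ s hs).inner ℝ (hasDerivAt_const s U)
      simp only [inner_zero_right, inner_add_left, real_inner_smul_left, zero_add] at h
      exact h
    have d₃ : ∀ s ∈ Set.Ioo a b, HasDerivAt (fun t => ⟪V₃ t, U⟫)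
        (-(k₂ s) * ⟪V₂ s, U⟫ + k₃ s * ⟪V₄ s, U⟫) s := by
      intro s hs
      have h := (hF₃ s hs).inner ℝ (hasDerivAt_const s U)
      simp only [inner_zero_right, inner_add_left, real_inner_smul_left, zero_add] at h
      exact h
    have d₄ : ∀ s ∈ Set.Ioo a b, HasDerivAt (fun t => ⟪V₄ t, U⟫)
        (-(k₃ s) * ⟪V₃ s, U⟫ + k₄ s * ⟪V₅ s, U⟫) s := by
      intro s hs
      have h := (hF₄ s hs).inner ℝ (hasDerivAt_const s U)
      simp only [inner_zero_right, inner_add_left, real_inner_smul_left, zero_add] at h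
      exact h
    have d₅ : ∀ s ∈ Set.Ioo a b, HasDerivAt (fun t => ⟪V₅ t, U⟫)
        (-(k₄ s) * ⟪V₄ s, U⟫) s := by
      intro s hs
      have h := (hF₅ s hs).inner ℝ (hasDerivAt_const s U)
      simp only [inner_zero_right, real_inner_smul_left, zero_add] at h
      exact h
    -- a₂ = 0
    have ha₂ : ∀ s ∈ Set.Ioo a b, ⟪V₂ s, U⟫ = 0 := by
      intro s hs
      have hconst : HasDerivAt (fun t => ⟪V₁ t, U⟫) 0 s := by
        refine (hasDerivAt_const s c).congr_of_eventuallyEq ?_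
        filter_upwards [hmem s hs] with t ht using hcU t ht
      have h0 := (d₁ s hs).unique hconst
      exact (mul_eq_zero.mp h0).resolve_left (hk₁ s hs).ne'
    -- a₃ = c * k₁ / k₂
    have ha₃ : ∀ s ∈ Set.Ioo a b, ⟪V₃ s, U⟫ = c * (k₁ s / k₂ s) := by
      intro s hs
      have hconst : HasDerivAt (fun t => ⟪V₂ t, U⟫) 0 s := by
        refine (hasDerivAt_const s (0 : ℝ)).congr_of_eventuallyEq ?_
        filter_upwards [hmem s hs] with t ht using ha₂ t ht
      have h0 := (d₂ s hs).unique hconst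
      rw [hcU s hs] at h0
      have hk := (hk₂ s hs).ne'
      rw [← mul_div_assoc, eq_div_iff hk]
      linarith
    -- derivative of k₁/k₂
    have hr : ∀ s ∈ Set.Ioo a b, HasDerivAt (fun t => k₁ t / k₂ t)
        (c⁻¹ * (k₃ s * ⟪V₄ s, U⟫)) s := by
      intro s hs
      have hd3 : HasDerivAt (fun t => ⟪V₃ t, U⟫) (k₃ s * ⟪V₄ s, U⟫) s := by
        have h := d₃ s hs
        rw [ha₂ s hs] at h
        simpa using h
      have h2 : HasDerivAt (fun t => c * (k₁ t / k₂ t)) (k₃ s * ⟪V₄ s, U⟫) s := by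
        refine hd3.congr_of_eventuallyEq ?_
        filter_upwards [hmem s hs] with t ht using (ha₃ t ht).symm
      have h3 := h2.const_mul c⁻¹
      refine h3.congr_of_eventuallyEq ?_
      filter_upwards with t
      field_simp
    have hkey : ∀ s ∈ Set.Ioo a b, deriv (fun t => k₁ t / k₂ t) s
        = c⁻¹ * (k₃ s * ⟪V₄ s, U⟫) := fun s hs => (hr s hs).deriv
    -- p and q are constant
    have hp : ∀ s ∈ Set.Ioo a b, HasDerivAt
        (fun t => ⟪V₄ t, U⟫ * Real.sin (θ t) + ⟪V₅ t, U⟫ * Real.cos (θ t) + c * F t)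
        (0 : ℝ) s := by
      intro s hs
      have h := (((d₄ s hs).mul (hθ s hs).sin).add ((d₅ s hs).mul (hθ s hs).cos)).add
        ((hF s hs).const_mul c)
      refine h.congr_deriv (Eq.symm ?_)
      rw [ha₃ s hs]
      ring
    have hq : ∀ s ∈ Set.Ioo a b, HasDerivAt
        (fun t => ⟪V₄ t, U⟫ * Real.cos (θ t) - ⟪V₅ t, U⟫ * Real.sin (θ t) + c * G t)
        (0 : ℝ) s := by
      intro s hs
      have h := (((d₄ s hs).mul (hθ s hs).cos).sub ((d₅ s hs).mul (hθ s hs).sin)).add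
        ((hG s hs).const_mul c)
      refine h.congr_deriv (Eq.symm ?_)
      rw [ha₃ s hs]
      ring
    have hpc := fun s hs => constOnIoo hp s hs s₀ hs₀
    have hqc := fun s hs => constOnIoo hq s hs s₀ hs₀
    refine ⟨(⟪V₄ s₀, U⟫ * Real.sin (θ s₀) + ⟪V₅ s₀, U⟫ * Real.cos (θ s₀) + c * F s₀) / c,
      -(⟪V₄ s₀, U⟫ * Real.cos (θ s₀) - ⟪V₅ s₀, U⟫ * Real.sin (θ s₀) + c * G s₀) / c,
      fun s hs => ?_⟩
    have h1 := hpc s hs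
    have h2 := hqc s hs
    rw [hkey s hs]
    have ht := sin_sq_add_cos_sq (θ s)
    have hk3 := (hk₃ s hs).ne'
    set x : ℝ := ⟪V₄ s, U⟫ with hx
    have hL : 1 / k₃ s * (c⁻¹ * (k₃ s * x)) = x / c := by
      field_simp
    rw [hL]
    have hcc : c * c⁻¹ = 1 := mul_inv_cancel₀ hc
    linear_combination (Real.sin (θ s) / c) * h1 + (Real.cos (θ s) / c) * h2 - (x / c) * ht
      - (Real.sin (θ s) * F s + Real.cos (θ s) * G s) * hcc
  · rintro ⟨A, B, hAB⟩
    -- the candidate constant vector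
    set a₄ : ℝ → ℝ := fun s => (A - F s) * Real.sin (θ s) - (B + G s) * Real.cos (θ s) with ha₄def
    set a₅ : ℝ → ℝ := fun s => (A - F s) * Real.cos (θ s) + (B + G s) * Real.sin (θ s) with ha₅def
    set W : ℝ → EuclideanSpace ℝ (Fin 5) :=
      fun s => V₁ s + (k₁ s / k₂ s) • V₃ s + a₄ s • V₄ s + a₅ s • V₅ s with hWdef
    -- derivative facts
    have hrdiff : ∀ s ∈ Set.Ioo a b, HasDerivAt (fun t => k₁ t / k₂ t) (k₃ s * a₄ s) s := by
      intro s hs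
      have h1 : DifferentiableAt ℝ (fun t => k₁ t / k₂ t) s := by
        have hk1 : DifferentiableAt ℝ k₁ s :=
          ((hk₁s.contDiffAt (hmem s hs)).differentiableAt (by norm_num))
        have hk2 : DifferentiableAt ℝ k₂ s :=
          ((hk₂s.contDiffAt (hmem s hs)).differentiableAt (by norm_num))
        exact hk1.div hk2 (hk₂ s hs).ne'
      have h2 := h1.hasDerivAt
      have h3 := hAB s hs
      have hk3 := (hk₃ s hs).ne'
      have : deriv (fun t => k₁ t / k₂ t) s = k₃ s * a₄ s := by
        rw [ha₄def]
        field_simp at h3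
        linarith
      rwa [this] at h2
    have ha₄d : ∀ s ∈ Set.Ioo a b, HasDerivAt a₄ (k₄ s * a₅ s - k₁ s * k₃ s / k₂ s) s := by
      intro s hs
      have h := (((hasDerivAt_const s A).sub (hF s hs)).mul (hθ s hs).sin).sub
        (((hasDerivAt_const s B).add (hG s hs)).mul (hθ s hs).cos)
      refine h.congr_deriv (Eq.symm ?_)
      have ht := sin_sq_add_cos_sq (θ s)
      simp only [ha₅def, Pi.sub_apply, Pi.add_apply]
      linear_combination (k₁ s * k₃ s / k₂ s) * ht
    have ha₅d : ∀ s ∈ Set.Ioo a b, HasDerivAt a₅ (-(k₄ s) * a₄ s) s := by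
      intro s hs
      have h := (((hasDerivAt_const s A).sub (hF s hs)).mul (hθ s hs).cos).add
        (((hasDerivAt_const s B).add (hG s hs)).mul (hθ s hs).sin)
      refine h.congr_deriv (Eq.symm ?_)
      simp only [ha₄def, Pi.sub_apply, Pi.add_apply]
      ring
    have hW0 : ∀ s ∈ Set.Ioo a b, HasDerivAt W (0 : EuclideanSpace ℝ (Fin 5)) s := by
      intro s hs
      have h := ((((hF₁ s hs).add ((hrdiff s hs).smul (hF₃ s hs))).add
        ((ha₄d s hs).smul (hF₄ s hs))).add ((ha₅d s hs).smul (hF₅ s hs)))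
      refine h.congr_deriv (Eq.symm ?_)
      have hk2 := (hk₂ s hs).ne'
      match_scalars <;> field_simp <;> ring
    have hWc := fun s hs => constOnIoo hW0 s hs s₀ hs₀
    -- inner product with V₁
    have hinner : ∀ s ∈ Set.Ioo a b, ⟪V₁ s, W s⟫ = 1 := by
      intro s hs
      have h := orthonormal_iff_ite.mp (horth s hs)
      have e11 : ⟪V₁ s, V₁ s⟫ = 1 := by simpa using h 0 0
      have e13 : ⟪V₁ s, V₃ s⟫ = 0 := by simpa using h 0 2
      have e14 : ⟪V₁ s, V₄ s⟫ = 0 := by simpa using h 0 3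
      have e15 : ⟪V₁ s, V₅ s⟫ = 0 := by simpa using h 0 4
      simp only [hWdef, inner_add_right, real_inner_smul_right, e11, e13, e14, e15,
        mul_zero, mul_one, add_zero]
    have hWne : W s₀ ≠ 0 := by
      intro h0
      have := hinner s₀ hs₀
      rw [h0, inner_zero_right] at this
      norm_num at this
    have hnorm : ‖W s₀‖ ≠ 0 := norm_ne_zero_iff.mpr hWne
    refine ⟨‖W s₀‖⁻¹ • W s₀, ?_, ‖W s₀‖⁻¹, inv_ne_zero hnorm, fun s hs => ?_⟩
    · rw [norm_smul, norm_inv, norm_norm, inv_mul_cancel₀ hnorm]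
    · rw [real_inner_smul_right, ← hWc s hs, hinner s hs, mul_one]
end

section
/- Let V₁,…,V₅ : I → E⁵ be a Frenet frame with positive smooth curvatures k₁,k₂,k₃,k₄ satisfying the Frenet equations on an open interval I. If each of the curvatures k₁, k₂, k₃, k₄ is a constant function on I (i.e., the curve is a W-curve), then there exists a constant unit vector U ∈ E⁵ such that s ↦ ⟪V₃(s), U⟫ is a nonzero constant on I (i.e., the curve is a V₃ slant helix). -/
open Real
open scoped RealInnerProductSpace ContDiff

theorem stmt_7
    (a b : ℝ) (hab : a < b)
    (V₁ V₂ V₃ V₄ V₅ : ℝ → EuclideanSpace ℝ (Fin 5))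
    (k₁ k₂ k₃ k₄ : ℝ → ℝ)
    (hV₁s : ContDiffOn ℝ ∞ V₁ (Set.Ioo a b))
    (hV₂s : ContDiffOn ℝ ∞ V₂ (Set.Ioo a b))
    (hV₃s : ContDiffOn ℝ ∞ V₃ (Set.Ioo a b))
    (hV₄s : ContDiffOn ℝ ∞ V₄ (Set.Ioo a b))
    (hV₅s : ContDiffOn ℝ ∞ V₅ (Set.Ioo a b))
    (hk₁s : ContDiffOn ℝ ∞ k₁ (Set.Ioo a b))
    (hk₂s : ContDiffOn ℝ ∞ k₂ (Set.Ioo a b))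
    (hk₃s : ContDiffOn ℝ ∞ k₃ (Set.Ioo a b))
    (hk₄s : ContDiffOn ℝ ∞ k₄ (Set.Ioo a b))
    (hk₁ : ∀ s ∈ Set.Ioo a b, 0 < k₁ s)
    (hk₂ : ∀ s ∈ Set.Ioo a b, 0 < k₂ s)
    (hk₃ : ∀ s ∈ Set.Ioo a b, 0 < k₃ s)
    (hk₄ : ∀ s ∈ Set.Ioo a b, 0 < k₄ s)
    (horth : ∀ s ∈ Set.Ioo a b, Orthonormal ℝ ![V₁ s, V₂ s, V₃ s, V₄ s, V₅ s])
    (hF₁ : ∀ s ∈ Set.Ioo a b, HasDerivAt V₁ (k₁ s • V₂ s) s)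
    (hF₂ : ∀ s ∈ Set.Ioo a b, HasDerivAt V₂ (-(k₁ s) • V₁ s + k₂ s • V₃ s) s)
    (hF₃ : ∀ s ∈ Set.Ioo a b, HasDerivAt V₃ (-(k₂ s) • V₂ s + k₃ s • V₄ s) s)
    (hF₄ : ∀ s ∈ Set.Ioo a b, HasDerivAt V₄ (-(k₃ s) • V₃ s + k₄ s • V₅ s) s)
    (hF₅ : ∀ s ∈ Set.Ioo a b, HasDerivAt V₅ (-(k₄ s) • V₄ s) s)
    (hc₁ : ∃ c : ℝ, ∀ s ∈ Set.Ioo a b, k₁ s = c)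
    (hc₂ : ∃ c : ℝ, ∀ s ∈ Set.Ioo a b, k₂ s = c)
    (hc₃ : ∃ c : ℝ, ∀ s ∈ Set.Ioo a b, k₃ s = c)
    (hc₄ : ∃ c : ℝ, ∀ s ∈ Set.Ioo a b, k₄ s = c) :
    ∃ U : EuclideanSpace ℝ (Fin 5), ‖U‖ = 1 ∧
      ∃ c : ℝ, c ≠ 0 ∧ ∀ s ∈ Set.Ioo a b, ⟪V₃ s, U⟫ = c := by
  obtain ⟨κ₁, hκ₁⟩ := hc₁
  obtain ⟨κ₂, hκ₂⟩ := hc₂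
  obtain ⟨κ₃, hκ₃⟩ := hc₃
  obtain ⟨κ₄, hκ₄⟩ := hc₄
  set s₀ : ℝ := (a + b) / 2 with hs₀def
  have hs₀ : s₀ ∈ Set.Ioo a b := ⟨by simp [hs₀def]; linarith, by simp [hs₀def]; linarith⟩
  have κ₁pos : 0 < κ₁ := hκ₁ s₀ hs₀ ▸ hk₁ s₀ hs₀
  have κ₄pos : 0 < κ₄ := hκ₄ s₀ hs₀ ▸ hk₄ s₀ hs₀
  set W : ℝ → EuclideanSpace ℝ (Fin 5) :=
    fun s => (κ₂ / κ₁) • V₁ s + V₃ s + (κ₃ / κ₄) • V₅ s with hWdef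
  have hW' : ∀ s ∈ Set.Ioo a b, HasDerivAt W 0 s := by
    intro s hs
    have h := (((hF₁ s hs).const_smul (κ₂ / κ₁)).add (hF₃ s hs)).add
      ((hF₅ s hs).const_smul (κ₃ / κ₄))
    rw [hκ₁ s hs, hκ₂ s hs, hκ₃ s hs, hκ₄ s hs] at h
    refine h.congr_deriv ?_
    have e1 : κ₂ / κ₁ * κ₁ = κ₂ := div_mul_cancel₀ _ (ne_of_gt κ₁pos)
    have e2 : κ₃ / κ₄ * κ₄ = κ₃ := div_mul_cancel₀ _ (ne_of_gt κ₄pos)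
    have e2' : -κ₄ * (κ₃ / κ₄) = -κ₃ := by field_simp
    rw [smul_smul, smul_comm, smul_smul, e1, e2']
    match_scalars <;> ring
  have hWconst : ∀ s ∈ Set.Ioo a b, W s = W s₀ := by
    intro s hs
    have := Convex.norm_image_sub_le_of_norm_hasDerivWithin_le
      (f := W) (f' := fun _ => (0 : EuclideanSpace ℝ (Fin 5))) (C := 0)
      (fun x hx => (hW' x hx).hasDerivWithinAt) (fun x _ => by simp)
      (convex_Ioo a b) hs₀ hs
    have h0 : ‖W s - W s₀‖ ≤ 0 := by simpa using this
    have := norm_nonneg (W s - W s₀)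
    have : ‖W s - W s₀‖ = 0 := le_antisymm h0 this
    rwa [norm_eq_zero, sub_eq_zero] at this
  have hinner : ∀ s ∈ Set.Ioo a b, ⟪V₃ s, W s⟫ = 1 := by
    intro s hs
    have h := orthonormal_iff_ite.mp (horth s hs)
    have h31 := h 2 0
    have h33 := h 2 2
    have h35 := h 2 4
    simp only [Matrix.cons_val_zero, Matrix.cons_val_one, Matrix.head_cons,
      Matrix.cons_val_two, Matrix.tail_cons, Matrix.cons_val_three, Matrix.cons_val_four,
      show (2 : Fin 5) ≠ 0 by decide, show (2 : Fin 5) ≠ 4 by decide,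
      if_neg, if_pos rfl, if_true, ne_eq, not_false_eq_true] at h31 h33 h35
    simp only [hWdef, inner_add_right, real_inner_smul_right, h31, h33, h35]
    ring
  have hU₀ : W s₀ ≠ 0 := by
    intro h
    have := hinner s₀ hs₀
    rw [h, inner_zero_right] at this
    norm_num at this
  have npos : 0 < ‖W s₀‖ := norm_pos_iff.mpr hU₀
  refine ⟨‖W s₀‖⁻¹ • W s₀, ?_, ‖W s₀‖⁻¹, by positivity, ?_⟩
  · rw [norm_smul, norm_inv, norm_norm, inv_mul_cancel₀ (ne_of_gt npos)]
  · intro s hs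
    rw [real_inner_smul_right, ← hWconst s hs, hinner s hs, mul_one]
end

section
/- Let V₁,…,V₅ : I → E⁵ be a Frenet frame with positive smooth curvatures k₁,k₂,k₃,k₄ satisfying the Frenet equations on an open interval I, and define f : I → ℝ by f = (k₄/k₃)′ · (1/k₂). Then there exists a constant unit vector U ∈ E⁵ such that s ↦ ⟪V₅(s), U⟫ is a nonzero constant on I (i.e., the curve is a V₅ slant helix) if and only if the differential equation ( k₄k₂/(k₁k₃) + f′/k₁ )′ + f·k₁ = 0 holds on I. -/
open Real
open scoped RealInnerProductSpace ContDiff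

theorem stmt_9
    (a b : ℝ) (hab : a < b)
    (V₁ V₂ V₃ V₄ V₅ : ℝ → EuclideanSpace ℝ (Fin 5))
    (k₁ k₂ k₃ k₄ : ℝ → ℝ)
    (hV₁s : ContDiffOn ℝ ∞ V₁ (Set.Ioo a b))
    (hV₂s : ContDiffOn ℝ ∞ V₂ (Set.Ioo a b))
    (hV₃s : ContDiffOn ℝ ∞ V₃ (Set.Ioo a b))
    (hV₄s : ContDiffOn ℝ ∞ V₄ (Set.Ioo a b))
    (hV₅s : ContDiffOn ℝ ∞ V₅ (Set.Ioo a b))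
    (hk₁s : ContDiffOn ℝ ∞ k₁ (Set.Ioo a b))
    (hk₂s : ContDiffOn ℝ ∞ k₂ (Set.Ioo a b))
    (hk₃s : ContDiffOn ℝ ∞ k₃ (Set.Ioo a b))
    (hk₄s : ContDiffOn ℝ ∞ k₄ (Set.Ioo a b))
    (hk₁ : ∀ s ∈ Set.Ioo a b, 0 < k₁ s)
    (hk₂ : ∀ s ∈ Set.Ioo a b, 0 < k₂ s)
    (hk₃ : ∀ s ∈ Set.Ioo a b, 0 < k₃ s)
    (hk₄ : ∀ s ∈ Set.Ioo a b, 0 < k₄ s)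
    (horth : ∀ s ∈ Set.Ioo a b, Orthonormal ℝ ![V₁ s, V₂ s, V₃ s, V₄ s, V₅ s])
    (hF₁ : ∀ s ∈ Set.Ioo a b, HasDerivAt V₁ (k₁ s • V₂ s) s)
    (hF₂ : ∀ s ∈ Set.Ioo a b, HasDerivAt V₂ (-(k₁ s) • V₁ s + k₂ s • V₃ s) s)
    (hF₃ : ∀ s ∈ Set.Ioo a b, HasDerivAt V₃ (-(k₂ s) • V₂ s + k₃ s • V₄ s) s)
    (hF₄ : ∀ s ∈ Set.Ioo a b, HasDerivAt V₄ (-(k₃ s) • V₃ s + k₄ s • V₅ s) s)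
    (hF₅ : ∀ s ∈ Set.Ioo a b, HasDerivAt V₅ (-(k₄ s) • V₄ s) s)
    (f : ℝ → ℝ)
    (hf : ∀ s ∈ Set.Ioo a b, f s = deriv (fun t => k₄ t / k₃ t) s * (1 / k₂ s)) :
    (∃ U : EuclideanSpace ℝ (Fin 5), ‖U‖ = 1 ∧
        ∃ c : ℝ, c ≠ 0 ∧ ∀ s ∈ Set.Ioo a b, ⟪V₅ s, U⟫ = c) ↔
    (∀ s ∈ Set.Ioo a b,
        deriv (fun t => k₄ t * k₂ t / (k₁ t * k₃ t) + deriv f t / k₁ t) s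
          + f s * k₁ s = 0) := by
  have hS : IsOpen (Set.Ioo a b) := isOpen_Ioo
  set S := Set.Ioo a b with hSdef
  have hk₁0 : ∀ s ∈ S, k₁ s ≠ 0 := fun s hs => (hk₁ s hs).ne'
  have hk₂0 : ∀ s ∈ S, k₂ s ≠ 0 := fun s hs => (hk₂ s hs).ne'
  have hk₃0 : ∀ s ∈ S, k₃ s ≠ 0 := fun s hs => (hk₃ s hs).ne'
  have hk₄0 : ∀ s ∈ S, k₄ s ≠ 0 := fun s hs => (hk₄ s hs).ne'
  have hone : (1 : WithTop ℕ∞) ≤ ∞ := by exact_mod_cast le_top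
  have key : ∀ (φ : ℝ → ℝ), ContDiffOn ℝ ∞ φ S → ∀ s ∈ S, HasDerivAt φ (deriv φ s) s := by
    intro φ hφ s hs
    exact ((hφ.contDiffAt (hS.mem_nhds hs)).differentiableAt (by simp)).hasDerivAt
  set H : ℝ → ℝ := fun t => k₄ t / k₃ t with hHdef
  have hHs : ContDiffOn ℝ ∞ H S := hk₄s.div hk₃s hk₃0
  have hH's : ContDiffOn ℝ ∞ (deriv H) S := hHs.deriv_of_isOpen hS (le_of_eq rfl)
  set F : ℝ → ℝ := fun t => deriv H t * (1 / k₂ t) with hFdef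
  have hFs : ContDiffOn ℝ ∞ F S := hH's.mul (contDiffOn_const.div hk₂s hk₂0)
  have hfF : ∀ s ∈ S, f s = F s := hf
  have hdf : ∀ s ∈ S, deriv f s = deriv F s := fun s hs =>
    Filter.EventuallyEq.deriv_eq (Filter.eventuallyEq_of_mem (hS.mem_nhds hs) hfF)
  have hF's : ContDiffOn ℝ ∞ (deriv F) S := hFs.deriv_of_isOpen hS (le_of_eq rfl)
  set G₀ : ℝ → ℝ := fun t => k₄ t * k₂ t / (k₁ t * k₃ t) + deriv F t / k₁ t with hG₀def
  have hG₀s : ContDiffOn ℝ ∞ G₀ S :=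
    ((hk₄s.mul hk₂s).div (hk₁s.mul hk₃s) (fun s hs => mul_ne_zero (hk₁0 s hs) (hk₃0 s hs))).add
      (hF's.div hk₁s hk₁0)
  have hG : ∀ s ∈ S, deriv (fun t => k₄ t * k₂ t / (k₁ t * k₃ t) + deriv f t / k₁ t) s
      = deriv G₀ s := by
    intro s hs
    apply Filter.EventuallyEq.deriv_eq
    filter_upwards [hS.mem_nhds hs] with t ht
    rw [hG₀def]
    simp only [hdf t ht]
  have hderH : ∀ s ∈ S, deriv H s = f s * k₂ s := by
    intro s hs
    rw [hf s hs, one_div, mul_assoc, inv_mul_cancel₀ (hk₂0 s hs), mul_one]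
  constructor
  · rintro ⟨U, hU, c, hc, hcU⟩
    have hu4 : ∀ s ∈ S, ⟪V₄ s, U⟫ = 0 := by
      intro s hs
      have hd : HasDerivAt (fun t => ⟪V₅ t, U⟫) (-(k₄ s * ⟪V₄ s, U⟫)) s := by
        have := (hF₅ s hs).inner ℝ (hasDerivAt_const s U)
        simpa only [inner_zero_right, zero_add, real_inner_smul_left, neg_mul] using this
      have h0 : HasDerivAt (fun t => ⟪V₅ t, U⟫) 0 s :=
        (hasDerivAt_const s c).congr_of_eventuallyEq
          (Filter.eventuallyEq_of_mem (hS.mem_nhds hs) hcU)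
      have h := hd.unique h0
      have h' : k₄ s * ⟪V₄ s, U⟫ = 0 := by linarith
      rcases mul_eq_zero.mp h' with h'' | h''
      · exact absurd h'' (hk₄0 s hs)
      · exact h''
    have hu3 : ∀ s ∈ S, ⟪V₃ s, U⟫ = c * H s := by
      intro s hs
      have hd : HasDerivAt (fun t => ⟪V₄ t, U⟫) (-(k₃ s * ⟪V₃ s, U⟫) + k₄ s * ⟪V₅ s, U⟫) s := by
        have := (hF₄ s hs).inner ℝ (hasDerivAt_const s U)
        simpa only [inner_zero_right, zero_add, inner_add_left, real_inner_smul_left, neg_mul] using this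
      have h0 : HasDerivAt (fun t => ⟪V₄ t, U⟫) 0 s :=
        (hasDerivAt_const s (0:ℝ)).congr_of_eventuallyEq
          (Filter.eventuallyEq_of_mem (hS.mem_nhds hs) hu4)
      have h := hd.unique h0
      rw [hcU s hs] at h
      have hk3 := hk₃0 s hs
      rw [hHdef]
      show ⟪V₃ s, U⟫ = c * (k₄ s / k₃ s)
      rw [← mul_div_assoc, eq_div_iff hk3]
      linear_combination -h
    have hu2 : ∀ s ∈ S, ⟪V₂ s, U⟫ = -(c * f s) := by
      intro s hs
      have hd : HasDerivAt (fun t => ⟪V₃ t, U⟫) (-(k₂ s * ⟪V₂ s, U⟫) + k₃ s * ⟪V₄ s, U⟫) s := by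
        have := (hF₃ s hs).inner ℝ (hasDerivAt_const s U)
        simpa only [inner_zero_right, zero_add, inner_add_left, real_inner_smul_left, neg_mul] using this
      have h0 : HasDerivAt (fun t => ⟪V₃ t, U⟫) (c * deriv H s) s := by
        refine HasDerivAt.congr_of_eventuallyEq (HasDerivAt.const_mul c (key H hHs s hs))
          (Filter.eventuallyEq_of_mem (hS.mem_nhds hs) hu3)
      have h := hd.unique h0
      rw [hu4 s hs, hderH s hs] at h
      have hk2 := hk₂0 s hs
      apply mul_left_cancel₀ hk2
      linear_combination -h
    have hu1 : ∀ s ∈ S, ⟪V₁ s, U⟫ = c * G₀ s := by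
      intro s hs
      have hd : HasDerivAt (fun t => ⟪V₂ t, U⟫) (-(k₁ s * ⟪V₁ s, U⟫) + k₂ s * ⟪V₃ s, U⟫) s := by
        have := (hF₂ s hs).inner ℝ (hasDerivAt_const s U)
        simpa only [inner_zero_right, zero_add, inner_add_left, real_inner_smul_left, neg_mul] using this
      have h0 : HasDerivAt (fun t => ⟪V₂ t, U⟫) (-(c * deriv F s)) s := by
        refine HasDerivAt.congr_of_eventuallyEq
          ((HasDerivAt.const_mul c (key F hFs s hs)).neg) ?_
        filter_upwards [hS.mem_nhds hs] with t ht
        rw [hu2 t ht, hfF t ht]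
        rfl
      have h := hd.unique h0
      rw [hu3 s hs] at h
      simp only [hHdef] at h
      have hk1 := hk₁0 s hs
      have hk3 := hk₃0 s hs
      have hx : ⟪V₁ s, U⟫ = (k₂ s * (c * (k₄ s / k₃ s)) + c * deriv F s) / k₁ s := by
        rw [eq_div_iff hk1]
        linear_combination -h
      rw [hx, hG₀def]
      show _ = c * (k₄ s * k₂ s / (k₁ s * k₃ s) + deriv F s / k₁ s)
      field_simp
    intro s hs
    have hd : HasDerivAt (fun t => ⟪V₁ t, U⟫) (k₁ s * ⟪V₂ s, U⟫) s := by
      have := (hF₁ s hs).inner ℝ (hasDerivAt_const s U)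
      simpa only [inner_zero_right, zero_add, real_inner_smul_left, neg_mul] using this
    have h0 : HasDerivAt (fun t => ⟪V₁ t, U⟫) (c * deriv G₀ s) s :=
      HasDerivAt.congr_of_eventuallyEq (HasDerivAt.const_mul c (key G₀ hG₀s s hs))
        (Filter.eventuallyEq_of_mem (hS.mem_nhds hs) hu1)
    have h := hd.unique h0
    rw [hu2 s hs] at h
    rw [hG s hs]
    have h2 : c * (deriv G₀ s + f s * k₁ s) = 0 := by linear_combination -h
    rcases mul_eq_zero.mp h2 with h3 | h3
    · exact absurd h3 hc
    · exact h3
  · intro hODE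
    have hG' : ∀ s ∈ S, deriv G₀ s = -(f s * k₁ s) := by
      intro s hs
      have h := hODE s hs
      rw [hG s hs] at h
      linarith
    set W : ℝ → EuclideanSpace ℝ (Fin 5) :=
      fun t => G₀ t • V₁ t - F t • V₂ t + H t • V₃ t + V₅ t with hWdef
    have hW' : ∀ s ∈ S, HasDerivAt W 0 s := by
      intro s hs
      have h1 := (key G₀ hG₀s s hs).smul (hF₁ s hs)
      have h2 := (key F hFs s hs).smul (hF₂ s hs)
      have h3 := (key H hHs s hs).smul (hF₃ s hs)
      have hd := ((h1.sub h2).add h3).add (hF₅ s hs)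
      refine hd.congr_deriv (Eq.symm ?_)
      rw [hG' s hs, hderH s hs, hfF s hs]
      have hk1 := hk₁0 s hs
      have hk3 := hk₃0 s hs
      match_scalars
      · simp only [hG₀def, hHdef, mul_one]
        rw [add_mul, div_mul_cancel₀ _ hk1, mul_comm (k₁ s) (k₃ s), ← div_div,
          div_mul_cancel₀ _ hk1]
        ring
      · ring
      · ring
      · simp only [hHdef, mul_one]
        rw [div_mul_cancel₀ _ hk3]
        ring
    have hdiffW : DifferentiableOn ℝ W S :=
      fun s hs => ((hW' s hs).differentiableAt).differentiableWithinAt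
    have hfd : ∀ s ∈ S, fderivWithin ℝ W S s = 0 := by
      intro s hs
      rw [fderivWithin_of_isOpen hS hs, (hW' s hs).hasFDerivAt.fderiv]
      ext x
      simp
    have hs₀ : (a + b) / 2 ∈ S := ⟨by linarith, by linarith⟩
    have hconst : ∀ s ∈ S, W s = W ((a + b) / 2) := fun s hs =>
      (convex_Ioo a b).is_const_of_fderivWithin_eq_zero hdiffW hfd hs hs₀
    have hip : ∀ s ∈ S, ⟪V₅ s, W s⟫ = 1 := by
      intro s hs
      have hON := orthonormal_iff_ite.mp (horth s hs)
      have h1 : ⟪V₅ s, V₁ s⟫ = 0 := by simpa using hON 4 0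
      have h2 : ⟪V₅ s, V₂ s⟫ = 0 := by simpa using hON 4 1
      have h3 : ⟪V₅ s, V₃ s⟫ = 0 := by simpa using hON 4 2
      have h5 : ⟪V₅ s, V₅ s⟫ = 1 := by simpa using hON 4 4
      simp only [hWdef]
      rw [inner_add_right, inner_add_right, inner_sub_right, real_inner_smul_right,
        real_inner_smul_right, real_inner_smul_right, h1, h2, h3, h5]
      ring
    have hW₀ : W ((a + b) / 2) ≠ 0 := by
      intro h
      have h1 := hip ((a + b) / 2) hs₀
      rw [h] at h1
      simp at h1
    refine ⟨‖W ((a + b) / 2)‖⁻¹ • W ((a + b) / 2), ?_, ‖W ((a + b) / 2)‖⁻¹, ?_, ?_⟩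
    · rw [norm_smul]
      have := norm_ne_zero_iff.mpr hW₀
      simp [abs_of_nonneg (inv_nonneg.mpr (norm_nonneg _))]
      field_simp
    · simpa using norm_ne_zero_iff.mpr hW₀
    · intro s hs
      rw [real_inner_smul_right, ← hconst s hs, hip s hs, mul_one]
end

section
/- Let V₁,…,V₅ : I → E⁵ be a Frenet frame with positive smooth curvatures k₁,k₂,k₃,k₄ satisfying the Frenet equations on an open interval I, and define f : I → ℝ by f = (k₄/k₃)′ · (1/k₂). If U ∈ E⁵ is a constant unit vector such that ⟪V₅(s), U⟫ = cos ψ is a nonzero constant on I (so the curve is a V₅ slant helix with axis U), then for every s ∈ I one has U = cos ψ · ( (k₄k₂/(k₁k₃))(s) + (f′/k₁)(s) )·V₁(s) − cos ψ · f(s)·V₂(s) + cos ψ · (k₄/k₃)(s)·V₃(s) + cos ψ · V₅(s). -/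
open Real
open scoped RealInnerProductSpace ContDiff

theorem stmt_10
    (a b : ℝ) (hab : a < b)
    (V₁ V₂ V₃ V₄ V₅ : ℝ → EuclideanSpace ℝ (Fin 5))
    (k₁ k₂ k₃ k₄ : ℝ → ℝ)
    (hV₁s : ContDiffOn ℝ ∞ V₁ (Set.Ioo a b))
    (hV₂s : ContDiffOn ℝ ∞ V₂ (Set.Ioo a b))
    (hV₃s : ContDiffOn ℝ ∞ V₃ (Set.Ioo a b))
    (hV₄s : ContDiffOn ℝ ∞ V₄ (Set.Ioo a b))
    (hV₅s : ContDiffOn ℝ ∞ V₅ (Set.Ioo a b))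
    (hk₁s : ContDiffOn ℝ ∞ k₁ (Set.Ioo a b))
    (hk₂s : ContDiffOn ℝ ∞ k₂ (Set.Ioo a b))
    (hk₃s : ContDiffOn ℝ ∞ k₃ (Set.Ioo a b))
    (hk₄s : ContDiffOn ℝ ∞ k₄ (Set.Ioo a b))
    (hk₁ : ∀ s ∈ Set.Ioo a b, 0 < k₁ s)
    (hk₂ : ∀ s ∈ Set.Ioo a b, 0 < k₂ s)
    (hk₃ : ∀ s ∈ Set.Ioo a b, 0 < k₃ s)
    (hk₄ : ∀ s ∈ Set.Ioo a b, 0 < k₄ s)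
    (horth : ∀ s ∈ Set.Ioo a b, Orthonormal ℝ ![V₁ s, V₂ s, V₃ s, V₄ s, V₅ s])
    (hF₁ : ∀ s ∈ Set.Ioo a b, HasDerivAt V₁ (k₁ s • V₂ s) s)
    (hF₂ : ∀ s ∈ Set.Ioo a b, HasDerivAt V₂ (-(k₁ s) • V₁ s + k₂ s • V₃ s) s)
    (hF₃ : ∀ s ∈ Set.Ioo a b, HasDerivAt V₃ (-(k₂ s) • V₂ s + k₃ s • V₄ s) s)
    (hF₄ : ∀ s ∈ Set.Ioo a b, HasDerivAt V₄ (-(k₃ s) • V₃ s + k₄ s • V₅ s) s)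
    (hF₅ : ∀ s ∈ Set.Ioo a b, HasDerivAt V₅ (-(k₄ s) • V₄ s) s)
    (f : ℝ → ℝ)
    (hf : ∀ s ∈ Set.Ioo a b, f s = deriv (fun t => k₄ t / k₃ t) s * (1 / k₂ s))
    (U : EuclideanSpace ℝ (Fin 5)) (ψ : ℝ)
    (hU : ‖U‖ = 1) (hψ : Real.cos ψ ≠ 0)
    (hhelix : ∀ s ∈ Set.Ioo a b, ⟪V₅ s, U⟫ = Real.cos ψ) :
    ∀ s ∈ Set.Ioo a b,
      U = (Real.cos ψ * (k₄ s * k₂ s / (k₁ s * k₃ s) + deriv f s / k₁ s)) • V₁ s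
            - (Real.cos ψ * f s) • V₂ s
            + (Real.cos ψ * (k₄ s / k₃ s)) • V₃ s
            + Real.cos ψ • V₅ s := by
  have hIopen : IsOpen (Set.Ioo a b) := isOpen_Ioo
  -- Step 1: ⟪V₄, U⟫ = 0 on I
  have h4 : ∀ t ∈ Set.Ioo a b, ⟪V₄ t, U⟫ = 0 := by
    intro t ht
    have hD : HasDerivAt (fun u => ⟪V₅ u, U⟫) (⟪-(k₄ t) • V₄ t, U⟫) t := by
      simpa using (hF₅ t ht).inner ℝ (hasDerivAt_const t U)
    have hE : (fun u => ⟪V₅ u, U⟫) =ᶠ[nhds t] fun _ => Real.cos ψ :=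
      Filter.eventuallyEq_of_mem (hIopen.mem_nhds ht) hhelix
    have h0 : HasDerivAt (fun u => ⟪V₅ u, U⟫) 0 t :=
      (hasDerivAt_const t (Real.cos ψ)).congr_of_eventuallyEq hE
    have huniq := hD.unique h0
    rw [real_inner_smul_left] at huniq
    have hk := (hk₄ t ht).ne'
    have hmul : k₄ t * ⟪V₄ t, U⟫ = 0 := by linarith
    exact (mul_eq_zero.mp hmul).resolve_left hk
  -- Step 2: ⟪V₃, U⟫ = cos ψ * (k₄ / k₃) on I
  have h3 : ∀ t ∈ Set.Ioo a b, ⟪V₃ t, U⟫ = Real.cos ψ * (k₄ t / k₃ t) := by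
    intro t ht
    have hD : HasDerivAt (fun u => ⟪V₄ u, U⟫)
        (⟪-(k₃ t) • V₃ t + k₄ t • V₅ t, U⟫) t := by
      simpa using (hF₄ t ht).inner ℝ (hasDerivAt_const t U)
    have hE : (fun u => ⟪V₄ u, U⟫) =ᶠ[nhds t] fun _ => (0 : ℝ) :=
      Filter.eventuallyEq_of_mem (hIopen.mem_nhds ht) h4
    have h0 : HasDerivAt (fun u => ⟪V₄ u, U⟫) 0 t :=
      (hasDerivAt_const t (0 : ℝ)).congr_of_eventuallyEq hE
    have huniq := hD.unique h0
    rw [inner_add_left, real_inner_smul_left, real_inner_smul_left,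
      hhelix t ht] at huniq
    have hk := (hk₃ t ht).ne'
    rw [mul_div_assoc', eq_div_iff hk]
    linarith
  -- Step 3: ⟪V₂, U⟫ = -(cos ψ * f) on I
  have h2 : ∀ t ∈ Set.Ioo a b, ⟪V₂ t, U⟫ = -(Real.cos ψ * f t) := by
    intro t ht
    have hD : HasDerivAt (fun u => ⟪V₃ u, U⟫)
        (⟪-(k₂ t) • V₂ t + k₃ t • V₄ t, U⟫) t := by
      simpa using (hF₃ t ht).inner ℝ (hasDerivAt_const t U)
    have hE : (fun u => ⟪V₃ u, U⟫) =ᶠ[nhds t]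
        fun u => Real.cos ψ * (k₄ u / k₃ u) :=
      Filter.eventuallyEq_of_mem (hIopen.mem_nhds ht) h3
    have hderiv : deriv (fun u => ⟪V₃ u, U⟫) t
        = Real.cos ψ * deriv (fun u => k₄ u / k₃ u) t := by
      rw [hE.deriv_eq, deriv_const_mul_field]
    rw [hD.deriv] at hderiv
    rw [inner_add_left, real_inner_smul_left, real_inner_smul_left,
      h4 t ht] at hderiv
    have hk := (hk₂ t ht).ne'
    have hx : ⟪V₂ t, U⟫ = -(Real.cos ψ * deriv (fun u => k₄ u / k₃ u) t) / k₂ t := by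
      rw [eq_div_iff hk]; linarith
    rw [hx, hf t ht]
    field_simp
  -- Step 4: value of ⟪V₁, U⟫ at s
  intro s hs
  have h1 : ⟪V₁ s, U⟫
      = Real.cos ψ * (k₄ s * k₂ s / (k₁ s * k₃ s) + deriv f s / k₁ s) := by
    have hD : HasDerivAt (fun u => ⟪V₂ u, U⟫)
        (⟪-(k₁ s) • V₁ s + k₂ s • V₃ s, U⟫) s := by
      simpa using (hF₂ s hs).inner ℝ (hasDerivAt_const s U)
    have hE : (fun u => ⟪V₂ u, U⟫) =ᶠ[nhds s] fun u => -(Real.cos ψ * f u) :=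
      Filter.eventuallyEq_of_mem (hIopen.mem_nhds hs) h2
    have hderiv : deriv (fun u => ⟪V₂ u, U⟫) s = -(Real.cos ψ * deriv f s) := by
      rw [hE.deriv_eq]
      have : (fun u => -(Real.cos ψ * f u)) = fun u => (-Real.cos ψ) * f u := by
        funext u; ring
      rw [this, deriv_const_mul_field]; ring
    rw [hD.deriv] at hderiv
    rw [inner_add_left, real_inner_smul_left, real_inner_smul_left,
      h3 s hs] at hderiv
    have hk1 := (hk₁ s hs).ne'
    have hk3 := (hk₃ s hs).ne'
    have hx : ⟪V₁ s, U⟫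
        = (k₂ s * (Real.cos ψ * (k₄ s / k₃ s)) + Real.cos ψ * deriv f s) / k₁ s := by
      rw [eq_div_iff hk1]; linarith
    rw [hx]
    field_simp
  -- Step 5: expand U in the orthonormal basis at s
  have hon := horth s hs
  have hcard : Fintype.card (Fin 5) = Module.finrank ℝ (EuclideanSpace ℝ (Fin 5)) := by
    simp
  have hsp : ⊤ ≤ Submodule.span ℝ (Set.range ![V₁ s, V₂ s, V₃ s, V₄ s, V₅ s]) :=
    (hon.linearIndependent.span_eq_top_of_card_eq_finrank hcard).ge
  let B : OrthonormalBasis (Fin 5) ℝ (EuclideanSpace ℝ (Fin 5)) :=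
    OrthonormalBasis.mk hon hsp
  have hB : ⇑B = ![V₁ s, V₂ s, V₃ s, V₄ s, V₅ s] := OrthonormalBasis.coe_mk hon hsp
  have hrepr := B.sum_repr' U
  rw [Fin.sum_univ_five] at hrepr
  simp only [hB, Matrix.cons_val_zero, Matrix.cons_val_one, Matrix.head_cons,
    Matrix.cons_val_two, Matrix.tail_cons, Matrix.cons_val_three,
    Matrix.cons_val_four] at hrepr
  rw [h1, h2 s hs, h3 s hs, h4 s hs, hhelix s hs] at hrepr
  rw [← hrepr]
  rw [zero_smul, neg_smul]
  abel
end

section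
/- Let V₁,…,V₅ : I → E⁵ be a Frenet frame with positive smooth curvatures k₁,k₂,k₃,k₄ satisfying the Frenet equations on an open interval I. Suppose there exists a constant unit vector U ∈ E⁵ such that s ↦ ⟪V₅(s), U⟫ is a nonzero constant on I (i.e., the curve is a V₅ slant helix), and suppose the ratio k₄/k₃ is constant on I. Then the ratio k₂/k₁ is constant on I (hence the curve is also a V₃ slant helix). -/
open Real
open scoped RealInnerProductSpace ContDiff

private lemma const_deriv_aux {a b : ℝ} {f : ℝ → ℝ} {c d s : ℝ} (hs : s ∈ Set.Ioo a b)
    (hc : ∀ t ∈ Set.Ioo a b, f t = c) (hd : HasDerivAt f d s) : d = 0 := by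
  have h0 : HasDerivAt f 0 s := by
    refine (hasDerivAt_const s c).congr_of_eventuallyEq ?_
    filter_upwards [isOpen_Ioo.mem_nhds hs] with t ht using hc t ht
  exact hd.unique h0

private lemma const_on_Ioo {a b : ℝ} {f : ℝ → ℝ}
    (hd : ∀ s ∈ Set.Ioo a b, HasDerivAt f 0 s) :
    ∀ x ∈ Set.Ioo a b, ∀ y ∈ Set.Ioo a b, f x = f y := by
  have key : ∀ x ∈ Set.Ioo a b, ∀ y ∈ Set.Ioo a b, x ≤ y → f y = f x := by
    intro x hx y hy hxy
    have hsub : Set.Icc x y ⊆ Set.Ioo a b := fun t ht =>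
      ⟨lt_of_lt_of_le hx.1 ht.1, lt_of_le_of_lt ht.2 hy.2⟩
    have hcont : ContinuousOn f (Set.Icc x y) := fun t ht =>
      ((hd t (hsub ht)).continuousAt).continuousWithinAt
    have hderiv : ∀ t ∈ Set.Ico x y, HasDerivWithinAt f 0 (Set.Ici t) t := fun t ht =>
      (hd t (hsub ⟨ht.1, ht.2.le⟩)).hasDerivWithinAt
    exact constant_of_has_deriv_right_zero hcont hderiv y ⟨hxy, le_rfl⟩
  intro x hx y hy
  rcases le_total x y with h | h
  · exact (key x hx y hy h).symm
  · exact key y hy x hx h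

theorem stmt_11
    (a b : ℝ) (hab : a < b)
    (V₁ V₂ V₃ V₄ V₅ : ℝ → EuclideanSpace ℝ (Fin 5))
    (k₁ k₂ k₃ k₄ : ℝ → ℝ)
    (hV₁s : ContDiffOn ℝ ∞ V₁ (Set.Ioo a b))
    (hV₂s : ContDiffOn ℝ ∞ V₂ (Set.Ioo a b))
    (hV₃s : ContDiffOn ℝ ∞ V₃ (Set.Ioo a b))
    (hV₄s : ContDiffOn ℝ ∞ V₄ (Set.Ioo a b))
    (hV₅s : ContDiffOn ℝ ∞ V₅ (Set.Ioo a b))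
    (hk₁s : ContDiffOn ℝ ∞ k₁ (Set.Ioo a b))
    (hk₂s : ContDiffOn ℝ ∞ k₂ (Set.Ioo a b))
    (hk₃s : ContDiffOn ℝ ∞ k₃ (Set.Ioo a b))
    (hk₄s : ContDiffOn ℝ ∞ k₄ (Set.Ioo a b))
    (hk₁ : ∀ s ∈ Set.Ioo a b, 0 < k₁ s)
    (hk₂ : ∀ s ∈ Set.Ioo a b, 0 < k₂ s)
    (hk₃ : ∀ s ∈ Set.Ioo a b, 0 < k₃ s)
    (hk₄ : ∀ s ∈ Set.Ioo a b, 0 < k₄ s)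
    (horth : ∀ s ∈ Set.Ioo a b, Orthonormal ℝ ![V₁ s, V₂ s, V₃ s, V₄ s, V₅ s])
    (hF₁ : ∀ s ∈ Set.Ioo a b, HasDerivAt V₁ (k₁ s • V₂ s) s)
    (hF₂ : ∀ s ∈ Set.Ioo a b, HasDerivAt V₂ (-(k₁ s) • V₁ s + k₂ s • V₃ s) s)
    (hF₃ : ∀ s ∈ Set.Ioo a b, HasDerivAt V₃ (-(k₂ s) • V₂ s + k₃ s • V₄ s) s)
    (hF₄ : ∀ s ∈ Set.Ioo a b, HasDerivAt V₄ (-(k₃ s) • V₃ s + k₄ s • V₅ s) s)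
    (hF₅ : ∀ s ∈ Set.Ioo a b, HasDerivAt V₅ (-(k₄ s) • V₄ s) s)
    (hhelix : ∃ U : EuclideanSpace ℝ (Fin 5), ‖U‖ = 1 ∧
        ∃ c : ℝ, c ≠ 0 ∧ ∀ s ∈ Set.Ioo a b, ⟪V₅ s, U⟫ = c)
    (hratio : ∃ c : ℝ, ∀ s ∈ Set.Ioo a b, k₄ s / k₃ s = c) :
    ∃ c : ℝ, ∀ s ∈ Set.Ioo a b, k₂ s / k₁ s = c := by
  obtain ⟨U, -, c, hc0, hc⟩ := hhelix
  obtain ⟨m, hm⟩ := hratio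
  set s₀ : ℝ := (a + b) / 2 with hs₀def
  have hs₀ : s₀ ∈ Set.Ioo a b := ⟨by linarith, by linarith⟩
  -- derivative of inner products
  have key : ∀ (V : ℝ → EuclideanSpace ℝ (Fin 5)) (D : EuclideanSpace ℝ (Fin 5)) (s : ℝ),
      HasDerivAt V D s → HasDerivAt (fun t => ⟪U, V t⟫) ⟪U, D⟫ s := by
    intro V D s h
    exact ((innerSL ℝ U).hasFDerivAt.comp_hasDerivAt s h)
  have hc' : ∀ s ∈ Set.Ioo a b, ⟪U, V₅ s⟫ = c := by
    intro s hs; rw [real_inner_comm]; exact hc s hs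
  -- Step 1: ⟪U, V₄ s⟫ = 0
  have h4 : ∀ s ∈ Set.Ioo a b, ⟪U, V₄ s⟫ = 0 := by
    intro s hs
    have h := const_deriv_aux hs hc' (key V₅ _ s (hF₅ s hs))
    rw [inner_smul_right] at h
    have hne : -(k₄ s) ≠ 0 := neg_ne_zero.mpr (hk₄ s hs).ne'
    exact (mul_eq_zero.mp h).resolve_left hne
  -- Step 2: ⟪U, V₃ s⟫ = m * c
  have h3 : ∀ s ∈ Set.Ioo a b, ⟪U, V₃ s⟫ = m * c := by
    intro s hs
    have h := const_deriv_aux hs h4 (key V₄ _ s (hF₄ s hs))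
    rw [inner_add_right, inner_smul_right, inner_smul_right, hc' s hs] at h
    have hk3 := (hk₃ s hs).ne'
    have hm'' : k₄ s = m * k₃ s := (div_eq_iff hk3).mp (hm s hs)
    have hx : k₃ s * ⟪U, V₃ s⟫ = k₃ s * (m * c) := by
      linear_combination (-1 : ℝ) * h + c * hm''
    exact mul_left_cancel₀ hk3 hx
  -- Step 3: ⟪U, V₂ s⟫ = 0
  have h2 : ∀ s ∈ Set.Ioo a b, ⟪U, V₂ s⟫ = 0 := by
    intro s hs
    have h := const_deriv_aux hs h3 (key V₃ _ s (hF₃ s hs))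
    rw [inner_add_right, inner_smul_right, inner_smul_right, h4 s hs, mul_zero, add_zero] at h
    have hne : -(k₂ s) ≠ 0 := neg_ne_zero.mpr (hk₂ s hs).ne'
    exact (mul_eq_zero.mp h).resolve_left hne
  -- Step 4: k₁ s * ⟪U, V₁ s⟫ = k₂ s * (m * c)
  have h1 : ∀ s ∈ Set.Ioo a b, k₂ s * (m * c) = k₁ s * ⟪U, V₁ s⟫ := by
    intro s hs
    have h := const_deriv_aux hs h2 (key V₂ _ s (hF₂ s hs))
    rw [inner_add_right, inner_smul_right, inner_smul_right, h3 s hs] at h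
    linarith
  -- a₁ is constant
  have h1const : ∀ s ∈ Set.Ioo a b, ⟪U, V₁ s⟫ = ⟪U, V₁ s₀⟫ := by
    have hd : ∀ s ∈ Set.Ioo a b, HasDerivAt (fun t => ⟪U, V₁ t⟫) 0 s := by
      intro s hs
      have h := key V₁ _ s (hF₁ s hs)
      rw [inner_smul_right, h2 s hs, mul_zero] at h
      exact h
    intro s hs
    exact const_on_Ioo hd s hs s₀ hs₀
  have hmc : m * c ≠ 0 := by
    have hm0 : m ≠ 0 := by
      rw [← hm s₀ hs₀]
      exact (div_pos (hk₄ s₀ hs₀) (hk₃ s₀ hs₀)).ne'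
    exact mul_ne_zero hm0 hc0
  refine ⟨⟪U, V₁ s₀⟫ / (m * c), fun s hs => ?_⟩
  have h := h1 s hs
  rw [h1const s hs] at h
  rw [div_eq_div_iff (hk₁ s hs).ne' hmc]
  linarith [h]
end

section
/- Let V₁,…,V₅ : I → E⁵ be a Frenet frame with positive smooth curvatures k₁,k₂,k₃,k₄ satisfying the Frenet equations on an open interval I. Suppose there exists a constant unit vector U ∈ E⁵ such that s ↦ ⟪V₅(s), U⟫ is a nonzero constant on I (i.e., the curve is a V₅ slant helix), and suppose the function s ↦ ‖V₅′(s)‖ / ‖V₄′(s)‖ is constant on I. Then the function s ↦ ‖V₂′(s)‖ / ‖V₁′(s)‖ is constant on I. -/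
open Real
open scoped RealInnerProductSpace ContDiff

lemma aux_const {a b : ℝ} {f : ℝ → ℝ}
    (h : ∀ s ∈ Set.Ioo a b, HasDerivAt f 0 s) :
    ∀ x ∈ Set.Ioo a b, ∀ y ∈ Set.Ioo a b, f x = f y := by
  intro x hx y hy
  refine (convex_Ioo a b).is_const_of_fderivWithin_eq_zero
    (fun s hs => (h s hs).differentiableAt.differentiableWithinAt) ?_ hx hy
  intro s hs
  rw [fderivWithin_eq_fderiv (isOpen_Ioo.uniqueDiffOn s hs) (h s hs).differentiableAt]
  ext
  simp [(h s hs).deriv, ← toSpanSingleton_deriv]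

lemma aux_locconst {a b : ℝ} {f : ℝ → ℝ} {c : ℝ}
    (h : ∀ x ∈ Set.Ioo a b, f x = c) {s : ℝ} (hs : s ∈ Set.Ioo a b) :
    HasDerivAt f 0 s :=
  (hasDerivAt_const s c).congr_of_eventuallyEq
    (Filter.eventuallyEq_of_mem (isOpen_Ioo.mem_nhds hs) h)

lemma aux_inner_deriv {V : ℝ → EuclideanSpace ℝ (Fin 5)}
    {d : EuclideanSpace ℝ (Fin 5)} {s : ℝ} (h : HasDerivAt V d s)
    (U : EuclideanSpace ℝ (Fin 5)) :
    HasDerivAt (fun t => ⟪V t, U⟫) ⟪d, U⟫ s := by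
  simpa using h.inner ℝ (hasDerivAt_const s U)

lemma aux_norm_comb {u v : EuclideanSpace ℝ (Fin 5)} (hu : ‖u‖ = 1) (hv : ‖v‖ = 1)
    (huv : ⟪u, v⟫ = 0) (x y : ℝ) :
    ‖x • u + y • v‖ = Real.sqrt (x ^ 2 + y ^ 2) := by
  have h : ‖x • u + y • v‖ ^ 2 = x ^ 2 + y ^ 2 := by
    rw [norm_add_sq_real, real_inner_smul_left, real_inner_smul_right, huv,
      norm_smul, norm_smul, hu, hv]
    simp [Real.norm_eq_abs, sq_abs]
  rw [← Real.sqrt_sq (norm_nonneg _), h]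

theorem stmt_12
    (a b : ℝ) (hab : a < b)
    (V₁ V₂ V₃ V₄ V₅ : ℝ → EuclideanSpace ℝ (Fin 5))
    (k₁ k₂ k₃ k₄ : ℝ → ℝ)
    (hV₁s : ContDiffOn ℝ ∞ V₁ (Set.Ioo a b))
    (hV₂s : ContDiffOn ℝ ∞ V₂ (Set.Ioo a b))
    (hV₃s : ContDiffOn ℝ ∞ V₃ (Set.Ioo a b))
    (hV₄s : ContDiffOn ℝ ∞ V₄ (Set.Ioo a b))
    (hV₅s : ContDiffOn ℝ ∞ V₅ (Set.Ioo a b))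
    (hk₁s : ContDiffOn ℝ ∞ k₁ (Set.Ioo a b))
    (hk₂s : ContDiffOn ℝ ∞ k₂ (Set.Ioo a b))
    (hk₃s : ContDiffOn ℝ ∞ k₃ (Set.Ioo a b))
    (hk₄s : ContDiffOn ℝ ∞ k₄ (Set.Ioo a b))
    (hk₁ : ∀ s ∈ Set.Ioo a b, 0 < k₁ s)
    (hk₂ : ∀ s ∈ Set.Ioo a b, 0 < k₂ s)
    (hk₃ : ∀ s ∈ Set.Ioo a b, 0 < k₃ s)
    (hk₄ : ∀ s ∈ Set.Ioo a b, 0 < k₄ s)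
    (horth : ∀ s ∈ Set.Ioo a b, Orthonormal ℝ ![V₁ s, V₂ s, V₃ s, V₄ s, V₅ s])
    (hF₁ : ∀ s ∈ Set.Ioo a b, HasDerivAt V₁ (k₁ s • V₂ s) s)
    (hF₂ : ∀ s ∈ Set.Ioo a b, HasDerivAt V₂ (-(k₁ s) • V₁ s + k₂ s • V₃ s) s)
    (hF₃ : ∀ s ∈ Set.Ioo a b, HasDerivAt V₃ (-(k₂ s) • V₂ s + k₃ s • V₄ s) s)
    (hF₄ : ∀ s ∈ Set.Ioo a b, HasDerivAt V₄ (-(k₃ s) • V₃ s + k₄ s • V₅ s) s)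
    (hF₅ : ∀ s ∈ Set.Ioo a b, HasDerivAt V₅ (-(k₄ s) • V₄ s) s)
    (hhelix : ∃ U : EuclideanSpace ℝ (Fin 5), ‖U‖ = 1 ∧
        ∃ c : ℝ, c ≠ 0 ∧ ∀ s ∈ Set.Ioo a b, ⟪V₅ s, U⟫ = c)
    (hratio : ∃ c : ℝ, ∀ s ∈ Set.Ioo a b, ‖deriv V₅ s‖ / ‖deriv V₄ s‖ = c) :
    ∃ c : ℝ, ∀ s ∈ Set.Ioo a b, ‖deriv V₂ s‖ / ‖deriv V₁ s‖ = c := by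
  obtain ⟨U, hU, c, hc0, hcU⟩ := hhelix
  obtain ⟨c', hc'⟩ := hratio
  have hs₀ : (a + b) / 2 ∈ Set.Ioo a b := ⟨by linarith, by linarith⟩
  set s₀ := (a + b) / 2 with hs₀def
  -- norms of derivatives
  have hnorm5 : ∀ s ∈ Set.Ioo a b, ‖deriv V₅ s‖ = k₄ s := by
    intro s hs
    rw [(hF₅ s hs).deriv, norm_smul]
    have : ‖V₄ s‖ = 1 := by simpa using (horth s hs).1 3
    rw [this]
    simp [abs_of_pos (hk₄ s hs)]
  have hnorm4 : ∀ s ∈ Set.Ioo a b, ‖deriv V₄ s‖ = Real.sqrt (k₃ s ^ 2 + k₄ s ^ 2) := by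
    intro s hs
    rw [(hF₄ s hs).deriv]
    have h35 : ⟪V₃ s, V₅ s⟫ = 0 := by
      simpa using (horth s hs).2 (show (2 : Fin 5) ≠ 4 by decide)
    have := aux_norm_comb (u := V₃ s) (v := V₅ s)
      (by simpa using (horth s hs).1 2) (by simpa using (horth s hs).1 4) h35
      (-(k₃ s)) (k₄ s)
    rw [this, neg_pow]
    norm_num
  have hnorm1 : ∀ s ∈ Set.Ioo a b, ‖deriv V₁ s‖ = k₁ s := by
    intro s hs
    rw [(hF₁ s hs).deriv, norm_smul]
    have : ‖V₂ s‖ = 1 := by simpa using (horth s hs).1 1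
    rw [this]
    simp [abs_of_pos (hk₁ s hs)]
  have hnorm2 : ∀ s ∈ Set.Ioo a b, ‖deriv V₂ s‖ = Real.sqrt (k₁ s ^ 2 + k₂ s ^ 2) := by
    intro s hs
    rw [(hF₂ s hs).deriv]
    have h13 : ⟪V₁ s, V₃ s⟫ = 0 := by
      simpa using (horth s hs).2 (show (0 : Fin 5) ≠ 2 by decide)
    have := aux_norm_comb (u := V₁ s) (v := V₃ s)
      (by simpa using (horth s hs).1 0) (by simpa using (horth s hs).1 2) h13
      (-(k₁ s)) (k₂ s)
    rw [this, neg_pow]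
    norm_num
  -- Step 1: ⟪V₄, U⟫ = 0
  have h4 : ∀ s ∈ Set.Ioo a b, ⟪V₄ s, U⟫ = 0 := by
    intro s hs
    have hd := aux_inner_deriv (hF₅ s hs) U
    have hz : HasDerivAt (fun t => ⟪V₅ t, U⟫) 0 s := aux_locconst hcU hs
    have h0 := hz.unique hd
    rw [real_inner_smul_left] at h0
    have hx : k₄ s * ⟪V₄ s, U⟫ = 0 := by linarith
    exact (mul_eq_zero.mp hx).resolve_left (hk₄ s hs).ne'
  -- Step 2: k₃ * ⟪V₃, U⟫ = k₄ * c
  have h3 : ∀ s ∈ Set.Ioo a b, k₃ s * ⟪V₃ s, U⟫ = k₄ s * c := by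
    intro s hs
    have hd := aux_inner_deriv (hF₄ s hs) U
    have hz : HasDerivAt (fun t => ⟪V₄ t, U⟫) 0 s := aux_locconst h4 hs
    have h0 := hz.unique hd
    rw [inner_add_left, real_inner_smul_left, real_inner_smul_left, hcU s hs] at h0
    linarith
  -- Step 3: k₃/k₄ constant
  have hr : ∀ s ∈ Set.Ioo a b, k₃ s * k₄ s₀ = k₃ s₀ * k₄ s := by
    intro s hs
    have e1 := (hc' s hs).trans (hc' s₀ hs₀).symm
    rw [hnorm5 s hs, hnorm4 s hs, hnorm5 s₀ hs₀, hnorm4 s₀ hs₀] at e1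
    have hB : 0 < k₃ s ^ 2 + k₄ s ^ 2 := by nlinarith [hk₃ s hs, hk₄ s hs]
    have hB₀ : 0 < k₃ s₀ ^ 2 + k₄ s₀ ^ 2 := by nlinarith [hk₃ s₀ hs₀, hk₄ s₀ hs₀]
    have hsB : 0 < Real.sqrt (k₃ s ^ 2 + k₄ s ^ 2) := Real.sqrt_pos.2 hB
    have hsB₀ : 0 < Real.sqrt (k₃ s₀ ^ 2 + k₄ s₀ ^ 2) := Real.sqrt_pos.2 hB₀
    have e2 : k₄ s * Real.sqrt (k₃ s₀ ^ 2 + k₄ s₀ ^ 2)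
        = k₄ s₀ * Real.sqrt (k₃ s ^ 2 + k₄ s ^ 2) := by
      field_simp at e1
      linarith [e1]
    have e3 : k₄ s ^ 2 * (k₃ s₀ ^ 2 + k₄ s₀ ^ 2) = k₄ s₀ ^ 2 * (k₃ s ^ 2 + k₄ s ^ 2) := by
      have := congrArg (· ^ 2) e2
      simpa [mul_pow, Real.sq_sqrt hB.le, Real.sq_sqrt hB₀.le] using this
    nlinarith [mul_pos (hk₃ s hs) (hk₄ s₀ hs₀), mul_pos (hk₃ s₀ hs₀) (hk₄ s hs)]
  -- Step 4: ⟪V₃, U⟫ constant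
  set γ : ℝ := k₄ s₀ * c / k₃ s₀ with hγdef
  have hγ0 : γ ≠ 0 := by
    exact div_ne_zero (mul_ne_zero (hk₄ s₀ hs₀).ne' hc0) (hk₃ s₀ hs₀).ne'
  have h3v : ∀ s ∈ Set.Ioo a b, ⟪V₃ s, U⟫ = γ := by
    intro s hs
    have h1 := h3 s hs
    have h2 := hr s hs
    have hk3 := (hk₃ s hs).ne'
    have hk30 := (hk₃ s₀ hs₀).ne'
    rw [hγdef, eq_div_iff hk30]
    apply mul_left_cancel₀ hk3
    linear_combination k₃ s₀ * h1 - c * h2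
  -- Step 5: ⟪V₂, U⟫ = 0
  have h2v : ∀ s ∈ Set.Ioo a b, ⟪V₂ s, U⟫ = 0 := by
    intro s hs
    have hd := aux_inner_deriv (hF₃ s hs) U
    have hz : HasDerivAt (fun t => ⟪V₃ t, U⟫) 0 s := aux_locconst h3v hs
    have h0 := hz.unique hd
    rw [inner_add_left, real_inner_smul_left, real_inner_smul_left, h4 s hs] at h0
    have hx : k₂ s * ⟪V₂ s, U⟫ = 0 := by linarith
    exact (mul_eq_zero.mp hx).resolve_left (hk₂ s hs).ne'
  -- Step 6: ⟪V₁, U⟫ constant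
  have h1const : ∀ s ∈ Set.Ioo a b, ⟪V₁ s, U⟫ = ⟪V₁ s₀, U⟫ := by
    intro s hs
    refine aux_const (f := fun t => ⟪V₁ t, U⟫) ?_ s hs s₀ hs₀
    intro t ht
    have hd := aux_inner_deriv (hF₁ t ht) U
    rwa [real_inner_smul_left, h2v t ht, mul_zero] at hd
  set m : ℝ := ⟪V₁ s₀, U⟫ with hmdef
  -- Step 7: k₂ = (m/γ) * k₁
  have h21 : ∀ s ∈ Set.Ioo a b, k₂ s = m / γ * k₁ s := by
    intro s hs
    have hd := aux_inner_deriv (hF₂ s hs) U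
    have hz : HasDerivAt (fun t => ⟪V₂ t, U⟫) 0 s := aux_locconst h2v hs
    have h0 := hz.unique hd
    rw [inner_add_left, real_inner_smul_left, real_inner_smul_left,
      h1const s hs, h3v s hs] at h0
    rw [div_mul_eq_mul_div, eq_div_iff hγ0]
    linarith
  -- Conclusion
  refine ⟨Real.sqrt (1 + (m / γ) ^ 2), fun s hs => ?_⟩
  rw [hnorm2 s hs, hnorm1 s hs, h21 s hs]
  have hk1 := hk₁ s hs
  have : k₁ s ^ 2 + (m / γ * k₁ s) ^ 2 = k₁ s ^ 2 * (1 + (m / γ) ^ 2) := by ring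
  rw [this, Real.sqrt_mul (sq_nonneg _), Real.sqrt_sq hk1.le]
  field_simp
end
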